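/- Let X be a real Banach space, F : B_X → B_{ℓ₁} a non-expansive bijection from the closed unit ball of X onto the closed unit ball of ℓ₁, and for each n let gₙ = F⁻¹(eₙ), where eₙ is the n-th canonical basis vector of ℓ₁. Then for every N ∈ ℕ and every collection of reals a₁, …, a_N with ‖Σ_{n≤N} aₙ·gₙ‖ ≤ 1, one has F(Σ_{n≤N} aₙ·gₙ) = Σ_{n≤N} aₙ·eₙ. -/

import Mathlib

open Metric Set Finset

set_option maxHeartbeats 1000000
noncomputable section
namespace PlasticL1

abbrev L1 := lp (fun _ : ℕ => ℝ) 1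

/-- master split over a finset -/
lemma norm_split (f : L1) (s : Finset ℕ) :
    ‖f‖ = (∑ i ∈ s, |f i|) + ‖f - ∑ i ∈ s, lp.single 1 i (f i)‖ := by
  have h := lp.norm_sub_norm_compl_sub_single (p := 1) (E := fun _ : ℕ => ℝ)
    (by simp) f s
  simp only [ENNReal.toReal_one, Real.rpow_one] at h
  have h2 : ∀ i ∈ s, ‖f i‖ = |f i| := fun i _ => rfl
  rw [Finset.sum_congr rfl h2] at h
  linarith

lemma norm_split_one (f : L1) (n : ℕ) :
    ‖f‖ = |f n| + ‖f - lp.single 1 n (f n)‖ := by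
  simpa using norm_split f {n}

lemma single_add (n : ℕ) (a b : ℝ) :
    lp.single 1 n (a + b) = (lp.single 1 n a : L1) + lp.single 1 n b := by
  ext j
  by_cases h : j = n
  · subst h; simp [lp.single_apply_self, lp.coeFn_add]
  · simp [lp.single_apply_ne _ _ _ h, lp.coeFn_add]

lemma norm_single (n : ℕ) (a : ℝ) : ‖(lp.single 1 n a : L1)‖ = |a| := by
  have := lp.norm_single (p := 1) (E := fun _ : ℕ => ℝ) (by simp) n a
  simpa using this

lemma coord_le_norm (f : L1) (n : ℕ) : |f n| ≤ ‖f‖ :=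
  lp.norm_apply_le_norm one_ne_zero f n

lemma norm_split_pair {n m : ℕ} (hnm : n ≠ m) (f : L1) :
    ‖f‖ = |f n| + |f m| +
      ‖f - lp.single 1 n (f n) - lp.single 1 m (f m)‖ := by
  have h := norm_split f {n, m}
  rw [Finset.sum_pair hnm, Finset.sum_pair hnm] at h
  rw [h, sub_sub]

lemma sub_single_coord_self (f : L1) (n : ℕ) (c : ℝ) :
    (((f - lp.single 1 n c : L1)) : ℕ → ℝ) n = f n - c := by
  simp [lp.coeFn_sub, lp.single_apply_self]

lemma sub_single_coord_ne (f : L1) {n m : ℕ} (hmn : m ≠ n) (c : ℝ) :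
    (((f - lp.single 1 n c : L1)) : ℕ → ℝ) m = f m := by
  simp [lp.coeFn_sub, lp.single_apply_ne _ _ _ hmn, Pi.single_eq_of_ne hmn]

/-- A1 : distance to a multiple of a coordinate vector -/
lemma norm_sub_single (f : L1) (n : ℕ) (c : ℝ) :
    ‖f - lp.single 1 n c‖ = |f n - c| + ‖f - lp.single 1 n (f n)‖ := by
  have h := norm_split_one (f - lp.single 1 n c) n
  rw [sub_single_coord_self] at h
  have e : f - lp.single 1 n c - lp.single 1 n (f n - c)
      = f - lp.single 1 n (f n) := by
    have : lp.single 1 n (f n) = (lp.single 1 n c : L1) + lp.single 1 n (f n - c) := by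
      rw [← single_add]; ring_nf
    rw [this]; abel
  rw [e] at h
  exact h

/-- A2 : two-coordinate version -/
lemma norm_sub_single_pair (f : L1) {n m : ℕ} (hnm : n ≠ m) (c d : ℝ) :
    ‖f - lp.single 1 n c - lp.single 1 m d‖
      = |f n - c| + |f m - d| +
        ‖f - lp.single 1 n (f n) - lp.single 1 m (f m)‖ := by
  have h := norm_split_pair hnm (f - lp.single 1 n c - lp.single 1 m d)
  simp only [lp.coeFn_sub, Pi.sub_apply, lp.single_apply_self,
    lp.single_apply_ne (E := fun _ : ℕ => ℝ) 1 m d hnm,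
    lp.single_apply_ne (E := fun _ : ℕ => ℝ) 1 n c hnm.symm,
    sub_zero] at h
  have e : f - lp.single 1 n c - lp.single 1 m d - lp.single 1 n (f n - c)
        - lp.single 1 m (f m - d)
      = f - lp.single 1 n (f n) - lp.single 1 m (f m) := by
    have e1 : lp.single 1 n (f n) = (lp.single 1 n c : L1) + lp.single 1 n (f n - c) := by
      rw [← single_add]; ring_nf
    have e2 : lp.single 1 m (f m) = (lp.single 1 m d : L1) + lp.single 1 m (f m - d) := by
      rw [← single_add]; ring_nf
    rw [e1, e2]; abel
  rw [e] at h
  exact h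

lemma eq_pair_of_rest_zero {f : L1} {n m : ℕ}
    (h : ‖f - lp.single 1 n (f n) - lp.single 1 m (f m)‖ = 0) :
    f = lp.single 1 n (f n) + lp.single 1 m (f m) := by
  have h2 : f - (lp.single 1 n (f n) + lp.single 1 m (f m)) = 0 := by
    have h3 := lp.norm_eq_zero_iff.mp h
    rw [sub_sub] at h3
    exact h3
  exact sub_eq_zero.mp h2



lemma single_zero' (n : ℕ) : (lp.single 1 n (0:ℝ) : L1) = 0 := by
  ext j
  by_cases h : j = n
  · subst h; simp [lp.single_apply_self]
  · simp [lp.single_apply_ne _ _ _ h]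

lemma smul_single' (n : ℕ) (c a : ℝ) :
    c • (lp.single 1 n a : L1) = lp.single 1 n (c * a) := by
  rw [← smul_eq_mul, lp.single_smul]

lemma norm_pair {n m : ℕ} (hnm : n ≠ m) (a b : ℝ) :
    ‖(lp.single 1 n a + lp.single 1 m b : L1)‖ = |a| + |b| := by
  set f : L1 := lp.single 1 n a + lp.single 1 m b with hf
  have fn : (f : ℕ → ℝ) n = a := by
    simp [hf, lp.coeFn_add, lp.single_apply_self, lp.single_apply_ne _ _ _ hnm, Pi.single_eq_of_ne hnm]
  have fm : (f : ℕ → ℝ) m = b := by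
    simp [hf, lp.coeFn_add, lp.single_apply_self, lp.single_apply_ne _ _ _ hnm.symm, Pi.single_eq_of_ne hnm.symm]
  have h := norm_split_pair hnm f
  rw [fn, fm] at h
  have e : f - lp.single 1 n a - lp.single 1 m b = 0 := by rw [hf]; abel
  rw [e] at h
  simpa using h

lemma pair_coord_n {n m : ℕ} (hnm : n ≠ m) (a b : ℝ) :
    ((lp.single 1 n a + lp.single 1 m b : L1) : ℕ → ℝ) n = a := by
  simp [lp.coeFn_add, lp.single_apply_self, lp.single_apply_ne _ _ _ hnm, Pi.single_eq_of_ne hnm]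

lemma pair_coord_m {n m : ℕ} (hnm : n ≠ m) (a b : ℝ) :
    ((lp.single 1 n a + lp.single 1 m b : L1) : ℕ → ℝ) m = b := by
  simp [lp.coeFn_add, lp.single_apply_self, lp.single_apply_ne _ _ _ hnm.symm, Pi.single_eq_of_ne hnm.symm]

lemma eq_single_of_rest_zero {f : L1} {n : ℕ}
    (h : ‖f - lp.single 1 n (f n)‖ = 0) : f = lp.single 1 n (f n) :=
  sub_eq_zero.mp (lp.norm_eq_zero_iff.mp h)

lemma pair_eq_iff {n m : ℕ} (hnm : n ≠ m) {a b a' b' : ℝ}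
    (h : (lp.single 1 n a + lp.single 1 m b : L1)
      = lp.single 1 n a' + lp.single 1 m b') : a = a' ∧ b = b' := by
  constructor
  · have h2 := congrArg (fun u : L1 => (u : ℕ → ℝ) n) h
    simpa [pair_coord_n hnm] using h2
  · have h2 := congrArg (fun u : L1 => (u : ℕ → ℝ) m) h
    simpa [pair_coord_m hnm] using h2

lemma contOn_of_lip {f : ℝ → ℝ} {s : Set ℝ} {C : ℝ} (hC : 0 ≤ C)
    (h : ∀ x ∈ s, ∀ y ∈ s, |f x - f y| ≤ C * |x - y|) : ContinuousOn f s := by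
  rw [Metric.continuousOn_iff]
  intro x hx ε hε
  refine ⟨ε / (C + 1), by positivity, fun y hy hxy => ?_⟩
  have hxy' : |y - x| < ε / (C + 1) := by rwa [Real.dist_eq] at hxy
  rw [Real.dist_eq]
  have h1 : |f y - f x| ≤ C * |y - x| := h y hy x hx
  have hC1 : (0:ℝ) < C + 1 := by linarith
  have h2 : C * |y - x| ≤ C * (ε / (C + 1)) :=
    mul_le_mul_of_nonneg_left (le_of_lt hxy') hC
  have h3 : C * (ε / (C + 1)) < ε := by
    rw [mul_div_assoc'] at *
    rw [div_lt_iff₀ hC1]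
    nlinarith
  linarith

lemma single_sub (n : ℕ) (a c : ℝ) :
    (lp.single 1 n (a - c) : L1) = lp.single 1 n a - lp.single 1 n c := by
  rw [sub_eq_add_neg a c, single_add, lp.single_neg, ← sub_eq_add_neg]

lemma pair_sub (n m : ℕ) (a b c d : ℝ) :
    (lp.single 1 n a + lp.single 1 m b : L1)
      - (lp.single 1 n c + lp.single 1 m d)
    = lp.single 1 n (a - c) + lp.single 1 m (b - d) := by
  rw [single_sub, single_sub]
  abel

lemma coord_abs_le_rest {w : L1} {j l : ℕ} (hlj : l ≠ j) :
    |w l| ≤ ‖w - lp.single 1 j (w j)‖ := by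
  have h := coord_le_norm (w - lp.single 1 j (w j)) l
  rwa [sub_single_coord_ne _ hlj] at h

lemma coord_abs_pair_le_rest {w : L1} {j l l' : ℕ} (hlj : l ≠ j) (hl'j : l' ≠ j)
    (hll' : l ≠ l') :
    |w l| + |w l'| ≤ ‖w - lp.single 1 j (w j)‖ := by
  set v : L1 := w - lp.single 1 j (w j) with hv
  have h := norm_split_pair hll' v
  have el : (v : ℕ → ℝ) l = w l := by rw [hv]; exact sub_single_coord_ne _ hlj _
  have el' : (v : ℕ → ℝ) l' = w l' := by rw [hv]; exact sub_single_coord_ne _ hl'j _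
  rw [el, el'] at h
  have hn := norm_nonneg (v - lp.single 1 l (w l) - lp.single 1 l' (w l'))
  linarith

lemma three_pinch {w : L1} {j₁ j₂ j₃ : ℕ} (h12 : j₁ ≠ j₂) (h13 : j₁ ≠ j₃) (h23 : j₂ ≠ j₃)
    (h1 : ‖w - lp.single 1 j₁ (w j₁)‖ ≤ |w j₁|)
    (h2 : ‖w - lp.single 1 j₂ (w j₂)‖ ≤ |w j₂|)
    (h3 : ‖w - lp.single 1 j₃ (w j₃)‖ ≤ |w j₃|) : w = 0 := by
  have c21 : |w j₂| ≤ ‖w - lp.single 1 j₁ (w j₁)‖ := coord_abs_le_rest h12.symm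
  have c31 : |w j₃| ≤ ‖w - lp.single 1 j₁ (w j₁)‖ := coord_abs_le_rest h13.symm
  have c12 : |w j₁| ≤ ‖w - lp.single 1 j₂ (w j₂)‖ := coord_abs_le_rest h12
  have c13 : |w j₁| ≤ ‖w - lp.single 1 j₃ (w j₃)‖ := coord_abs_le_rest h13
  have cpair : |w j₂| + |w j₃| ≤ ‖w - lp.single 1 j₁ (w j₁)‖ :=
    coord_abs_pair_le_rest h12.symm h13.symm h23
  have e2 : |w j₂| = |w j₁| := le_antisymm (le_trans c21 h1) (le_trans c12 h2)
  have e3 : |w j₃| = |w j₁| := le_antisymm (le_trans c31 h1) (le_trans c13 h3)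
  have hz : |w j₁| = 0 := by
    have := le_trans cpair h1
    rw [e2, e3] at this
    have := abs_nonneg (w j₁)
    linarith
  have hrest : ‖w - lp.single 1 j₁ (w j₁)‖ = 0 := by
    have := norm_nonneg (w - lp.single 1 j₁ (w j₁))
    linarith [le_trans h1 (le_of_eq hz)]
  have hw1 : w j₁ = 0 := abs_eq_zero.mp hz
  have := eq_single_of_rest_zero hrest
  rw [hw1, single_zero'] at this
  exact this

lemma sum_update_split {M : Type*} [AddCommGroup M] {N j : ℕ} (hj : j ∈ Finset.range N)
    (t tj' : ℕ → M) (h0 : tj' j = 0) (hsame : ∀ n, n ≠ j → tj' n = t n) :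
    ∑ n ∈ Finset.range N, tj' n = (∑ n ∈ Finset.range N, t n) - t j := by
  have h1 : t j + ∑ n ∈ (Finset.range N).erase j, t n = ∑ n ∈ Finset.range N, t n :=
    Finset.add_sum_erase _ _ hj
  have h2 : tj' j + ∑ n ∈ (Finset.range N).erase j, tj' n = ∑ n ∈ Finset.range N, tj' n :=
    Finset.add_sum_erase _ _ hj
  have h3 : ∑ n ∈ (Finset.range N).erase j, tj' n = ∑ n ∈ (Finset.range N).erase j, t n :=
    Finset.sum_congr rfl (fun n hn => hsame n (Finset.ne_of_mem_erase hn))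
  rw [h0, zero_add, h3] at h2
  rw [← h2, ← h1]
  abel

lemma filter_update_erase (N j : ℕ) (a : ℕ → ℝ) :
    (Finset.range N).filter (fun n => Function.update a j 0 n ≠ 0)
      = ((Finset.range N).filter (fun n => a n ≠ 0)).erase j := by
  ext n
  simp only [Finset.mem_filter, Finset.mem_erase, Function.update_apply]
  by_cases h : n = j
  · subst h; simp
  · simp only [if_neg h, h, not_false_iff, true_and]
    tauto

section Main

variable {X : Type*} [NormedAddCommGroup X] [NormedSpace ℝ X]

lemma mem_cb {z : X} (h : ‖z‖ ≤ 1) : z ∈ closedBall (0 : X) 1 := by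
  simpa [mem_closedBall_zero_iff] using h

lemma mem_cb' {z : L1} (h : ‖z‖ ≤ 1) : z ∈ closedBall (0 : L1) 1 := by
  simpa [mem_closedBall_zero_iff] using h

variable (F : X → L1)
variable (hbij : Set.BijOn F (closedBall (0 : X) 1) (closedBall (0 : L1) 1))
variable (hne : ∀ x ∈ closedBall (0 : X) 1, ∀ y ∈ closedBall (0 : X) 1,
      ‖F x - F y‖ ≤ ‖x - y‖)

include hbij hne in
lemma F_zero : F 0 = 0 := by
  by_contra h0
  set w₀ := F 0 with hw₀
  have hw₀ne : w₀ ≠ 0 := h0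
  have hn0 : 0 < ‖w₀‖ := norm_pos_iff.mpr hw₀ne
  set w : L1 := -(‖w₀‖⁻¹ • w₀) with hw
  have hwn : ‖w‖ = 1 := by
    rw [hw, norm_neg, norm_smul]
    simp [abs_of_pos (inv_pos.mpr hn0), inv_mul_cancel₀ hn0.ne']
  obtain ⟨z, hz, hFz⟩ := hbij.surjOn (mem_cb' (le_of_eq hwn))
  have h1 : ‖F z - F 0‖ ≤ ‖z - 0‖ := hne z hz 0 (mem_cb (by simp))
  rw [hFz, sub_zero] at h1
  have hz1 : ‖z‖ ≤ 1 := by simpa [mem_closedBall_zero_iff] using hz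
  have h2 : ‖w - w₀‖ = 1 + ‖w₀‖ := by
    rw [hw, ← norm_neg]
    have : -(-(‖w₀‖⁻¹ • w₀) - w₀) = (‖w₀‖⁻¹ + 1) • w₀ := by
      rw [add_smul, one_smul]; abel
    rw [this, norm_smul, Real.norm_eq_abs]
    have : |‖w₀‖⁻¹ + 1| = ‖w₀‖⁻¹ + 1 := abs_of_pos (by positivity)
    rw [this, add_mul, inv_mul_cancel₀ hn0.ne', one_mul]
  rw [h2] at h1
  linarith

include hne in
lemma F_norm_le (hF0 : F 0 = 0) {z : X} (hz : ‖z‖ ≤ 1) : ‖F z‖ ≤ ‖z‖ := by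
  have := hne z (mem_cb hz) 0 (mem_cb (by simp))
  simpa [hF0] using this

include hne in
lemma ray (hF0 : F 0 = 0) {b : X} {n : ℕ} {s : ℝ} (hb : ‖b‖ ≤ 1)
    (hFb : F b = lp.single 1 n s) (hs : |s| = 1)
    {t : ℝ} (ht0 : 0 ≤ t) (ht1 : t ≤ 1) :
    F (t • b) = lp.single 1 n (t * s) := by
  set w := F (t • b) with hwdef
  have htb : ‖t • b‖ ≤ 1 := by
    rw [norm_smul, Real.norm_eq_abs, abs_of_nonneg ht0]
    calc t * ‖b‖ ≤ 1 * 1 := by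
          apply mul_le_mul ht1 hb (norm_nonneg _) zero_le_one
      _ = 1 := one_mul 1
  have h1 : ‖w‖ ≤ t := by
    have := F_norm_le F hne hF0 htb
    rw [norm_smul, Real.norm_eq_abs, abs_of_nonneg ht0] at this
    calc ‖w‖ ≤ t * ‖b‖ := this
      _ ≤ t * 1 := by apply mul_le_mul_of_nonneg_left hb ht0
      _ = t := mul_one t
  have h2 : ‖w - lp.single 1 n s‖ ≤ 1 - t := by
    have := hne (t • b) (mem_cb htb) b (mem_cb hb)
    rw [hFb] at this
    calc ‖w - lp.single 1 n s‖ ≤ ‖t • b - b‖ := this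
      _ = ‖(t - 1) • b‖ := by rw [sub_smul, one_smul]
      _ = |t - 1| * ‖b‖ := by rw [norm_smul, Real.norm_eq_abs]
      _ ≤ |t - 1| * 1 := by
          apply mul_le_mul_of_nonneg_left hb (abs_nonneg _)
      _ = 1 - t := by rw [mul_one, abs_of_nonpos (by linarith)]; ring
  -- dissect
  set p := (w : ℕ → ℝ) n with hp
  set R := ‖w - lp.single 1 n p‖ with hR
  have hRnn : 0 ≤ R := norm_nonneg _
  have e1 : ‖w‖ = |p| + R := norm_split_one w n
  have e2 : ‖w - lp.single 1 n s‖ = |p - s| + R := norm_sub_single w n s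
  have hps : |p| + |p - s| ≥ 1 := by
    have : |s| ≤ |p| + |s - p| := by
      calc |s| = |p + (s - p)| := by ring_nf
        _ ≤ |p| + |s - p| := abs_add_le _ _
    rw [abs_sub_comm] at this
    linarith [hs ▸ this]
  have hR0 : R = 0 := by
    have := e1 ▸ h1
    have := e2 ▸ h2
    linarith
  have hpt : |p| ≤ t := by rw [e1, hR0] at h1; linarith
  have hpst : |p - s| ≤ 1 - t := by rw [e2, hR0] at h2; linarith
  have hpts : p = t * s := by
    have h3 : (p - s)^2 ≤ (1 - t)^2 := by
      have := mul_self_le_mul_self (abs_nonneg (p - s)) hpst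
      simpa [← sq_abs (p - s), sq] using this
    have h4 : p^2 ≤ t^2 := by
      have := mul_self_le_mul_self (abs_nonneg p) hpt
      simpa [← sq_abs p, sq] using this
    have h5 : s^2 = 1 := by
      have := sq_abs s
      rw [hs] at this
      linarith
    have key : (p - t*s)^2 ≤ 0 := by nlinarith
    have := sq_nonneg (p - t*s)
    have : (p - t*s)^2 = 0 := le_antisymm key this
    have := pow_eq_zero_iff (n := 2) (by norm_num) |>.mp this
    linarith
  have : w = lp.single 1 n p := eq_single_of_rest_zero (by rw [← hR, hR0])
  rw [this, hpts]

include hbij hne in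
lemma opp (hF0 : F 0 = 0) {b : X} {n : ℕ} {s : ℝ} (hb : ‖b‖ ≤ 1)
    (hFb : F b = lp.single 1 n s) (hs : |s| = 1) :
    F (-b) = lp.single 1 n (-s) := by
  have hsn : ‖(lp.single 1 n (-s) : L1)‖ ≤ 1 := by rw [norm_single]; simp [hs]
  obtain ⟨b', hb'mem, hFb'⟩ := hbij.surjOn (mem_cb' hsn)
  have hb' : ‖b'‖ ≤ 1 := by simpa [mem_closedBall_zero_iff] using hb'mem
  have hdist : ‖b - b'‖ ≤ 2 := by
    calc ‖b - b'‖ ≤ ‖b‖ + ‖b'‖ := norm_sub_le _ _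
      _ ≤ 2 := by linarith
  have hdist2 : (2:ℝ) ≤ ‖b - b'‖ := by
    have h := hne b (mem_cb hb) b' hb'mem
    rw [hFb, hFb'] at h
    have : lp.single 1 n s - lp.single 1 n (-s) = (lp.single 1 n (2*s) : L1) := by
      rw [show (2:ℝ)*s = s - (-s) by ring, show (s - (-s) : ℝ) = s + (-(-s)) by ring]
      rw [single_add]
      simp
    rw [this, norm_single] at h
    have : |2*s| = 2 := by rw [abs_mul, hs]; norm_num
    linarith [this ▸ h]
  set M := (2:ℝ)⁻¹ • (b + b') with hM
  have hMb : M - b = (2:ℝ)⁻¹ • (b' - b) := by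
    rw [hM]; module
  have hMb' : M - b' = (2:ℝ)⁻¹ • (b - b') := by
    rw [hM]; module
  have hMnorm : ‖M‖ ≤ 1 := by
    rw [hM, norm_smul, Real.norm_eq_abs]
    have : |(2:ℝ)⁻¹| = 2⁻¹ := by norm_num
    rw [this]
    have : ‖b + b'‖ ≤ 2 := by
      calc ‖b + b'‖ ≤ ‖b‖ + ‖b'‖ := norm_add_le _ _
        _ ≤ 2 := by linarith
    linarith
  have hd1 : ‖F M - lp.single 1 n s‖ ≤ 1 := by
    have h := hne M (mem_cb hMnorm) b (mem_cb hb)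
    rw [hFb] at h
    calc ‖F M - lp.single 1 n s‖ ≤ ‖M - b‖ := h
      _ = 2⁻¹ * ‖b' - b‖ := by
          rw [hMb, norm_smul, Real.norm_eq_abs]; norm_num
      _ ≤ 1 := by rw [norm_sub_rev]; linarith
  have hd2 : ‖F M - lp.single 1 n (-s)‖ ≤ 1 := by
    have h := hne M (mem_cb hMnorm) b' hb'mem
    rw [hFb'] at h
    calc ‖F M - lp.single 1 n (-s)‖ ≤ ‖M - b'‖ := h
      _ = 2⁻¹ * ‖b - b'‖ := by
          rw [hMb', norm_smul, Real.norm_eq_abs]; norm_num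
      _ ≤ 1 := by linarith
  -- coordinates
  set v := F M with hv
  set p := (v : ℕ → ℝ) n with hp
  set R := ‖v - lp.single 1 n p‖ with hR
  have hRnn : (0:ℝ) ≤ R := norm_nonneg _
  have e1 : ‖v - lp.single 1 n s‖ = |p - s| + R := norm_sub_single v n s
  have e2 : ‖v - lp.single 1 n (-s)‖ = |p + s| + R := by
    have := norm_sub_single v n (-s)
    simpa [sub_neg_eq_add] using this
  have habs : (2:ℝ) ≤ |p - s| + |p + s| := by
    have : |(2:ℝ)*s| ≤ |p + s| + |p - s| := by
      calc |(2:ℝ)*s| = |(p + s) - (p - s)| := by ring_nf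
        _ ≤ |p + s| + |p - s| := abs_sub _ _
    have h2s : |2*s| = 2 := by rw [abs_mul, hs]; norm_num
    linarith [h2s ▸ this]
  have g1 : |p - s| + R ≤ 1 := by rw [← e1]; exact hd1
  have g2 : |p + s| + R ≤ 1 := by rw [← e2]; exact hd2
  have hR0 : R = 0 := by linarith
  have hps1 : |p - s| = 1 := by
    have := abs_nonneg (p + s)
    linarith
  have hps2 : |p + s| = 1 := by
    have := abs_nonneg (p - s)
    linarith
  have hs2 : s^2 = 1 := by
    have := sq_abs s; rw [hs] at this; linarith
  have hp0 : p = 0 := by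
    have q1 : (p - s)^2 = 1 := by rw [← sq_abs (p - s), hps1]; norm_num
    have q2 : (p + s)^2 = 1 := by rw [← sq_abs (p + s), hps2]; norm_num
    nlinarith
  have hveq : v = lp.single 1 n p := eq_single_of_rest_zero (by rw [← hR, hR0])
  have hv0 : v = 0 := by rw [hveq, hp0, single_zero']
  have hM0 : M = 0 := by
    apply hbij.injOn (mem_cb hMnorm) (mem_cb (by simp))
    rw [← hv, hv0, hF0]
  have hsum0 : b + b' = 0 := by
    have h2 : (2:ℝ) • M = b + b' := by
      rw [hM, smul_smul]
      norm_num
    rw [hM0, smul_zero] at h2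
    exact h2.symm
  have hbb' : b' = -b := by
    have h := congrArg (fun z => z - b) hsum0
    simpa using h
  rw [← hbb']
  exact hFb'

include hbij hne in
lemma rayIcc (hF0 : F 0 = 0) {b : X} {n : ℕ} {s : ℝ} (hb : ‖b‖ ≤ 1)
    (hFb : F b = lp.single 1 n s) (hs : |s| = 1)
    {t : ℝ} (ht0 : -1 ≤ t) (ht1 : t ≤ 1) :
    F (t • b) = lp.single 1 n (t * s) := by
  rcases le_or_gt 0 t with h | h
  · exact ray F hne hF0 hb hFb hs h ht1
  · have hnegb : F (-b) = lp.single 1 n (-s) := opp F hbij hne hF0 hb hFb hs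
    have h1 : F ((-t) • (-b)) = lp.single 1 n ((-t) * (-s)) := by
      apply ray F hne hF0 (by simpa using hb) hnegb (by simpa using hs)
        (by linarith) (by linarith)
    have e : (-t) • (-b) = t • b := by rw [neg_smul, smul_neg, neg_neg]
    have e2 : (-t) * (-s) = t * s := by ring
    rw [e, e2] at h1
    exact h1

include hbij hne in
lemma pair_diam (hF0 : F 0 = 0) {b₁ b₂ : X} {n m : ℕ} {s₁ s₂ : ℝ} (hnm : n ≠ m)
    (hb₁ : ‖b₁‖ ≤ 1) (hb₂ : ‖b₂‖ ≤ 1)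
    (hFb₁ : F b₁ = lp.single 1 n s₁) (hFb₂ : F b₂ = lp.single 1 m s₂)
    (hs₁ : |s₁| = 1) (hs₂ : |s₂| = 1) :
    (2:ℝ) ≤ ‖b₁ + b₂‖ := by
  have hopp : F (-b₂) = lp.single 1 m (-s₂) := opp F hbij hne hF0 hb₂ hFb₂ hs₂
  have h := hne b₁ (mem_cb hb₁) (-b₂) (mem_cb (by simpa using hb₂))
  rw [hFb₁, hopp] at h
  have e : (lp.single 1 n s₁ : L1) - lp.single 1 m (-s₂)
      = lp.single 1 n s₁ + lp.single 1 m s₂ := by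
    rw [lp.single_neg]
    abel
  rw [e, norm_pair hnm, hs₁, hs₂] at h
  have e2 : b₁ - -b₂ = b₁ + b₂ := by abel
  rw [e2] at h
  linarith

include hbij hne in
lemma pair_func (hF0 : F 0 = 0) {b₁ b₂ : X} {n m : ℕ} {s₁ s₂ : ℝ} (hnm : n ≠ m)
    (hb₁ : ‖b₁‖ ≤ 1) (hb₂ : ‖b₂‖ ≤ 1)
    (hFb₁ : F b₁ = lp.single 1 n s₁) (hFb₂ : F b₂ = lp.single 1 m s₂)
    (hs₁ : |s₁| = 1) (hs₂ : |s₂| = 1) :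
    ∃ f : X →L[ℝ] ℝ, ‖f‖ = 1 ∧ f b₁ = 1 ∧ f b₂ = 1 := by
  have hd : (2:ℝ) ≤ ‖b₁ + b₂‖ :=
    pair_diam F hbij hne hF0 hnm hb₁ hb₂ hFb₁ hFb₂ hs₁ hs₂
  have hd2 : ‖b₁ + b₂‖ ≤ 2 := by
    calc ‖b₁ + b₂‖ ≤ ‖b₁‖ + ‖b₂‖ := norm_add_le _ _
      _ ≤ 2 := by linarith
  have hne0 : b₁ + b₂ ≠ 0 := by
    intro h
    rw [h, norm_zero] at hd
    linarith
  obtain ⟨f, hf1, hfx⟩ := exists_dual_vector ℝ (b₁ + b₂) (norm_ne_zero_iff.mpr hne0)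
  have hfx' : f (b₁ + b₂) = ‖b₁ + b₂‖ := by exact_mod_cast hfx
  have hfb₁ : f b₁ ≤ 1 := by
    have := f.le_opNorm b₁
    rw [hf1, one_mul] at this
    calc f b₁ ≤ |f b₁| := le_abs_self _
      _ = ‖f b₁‖ := (Real.norm_eq_abs _).symm
      _ ≤ ‖b₁‖ := this
      _ ≤ 1 := hb₁
  have hfb₂ : f b₂ ≤ 1 := by
    have := f.le_opNorm b₂
    rw [hf1, one_mul] at this
    calc f b₂ ≤ |f b₂| := le_abs_self _
      _ = ‖f b₂‖ := (Real.norm_eq_abs _).symm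
      _ ≤ ‖b₂‖ := this
      _ ≤ 1 := hb₂
  have hsum : f b₁ + f b₂ = ‖b₁ + b₂‖ := by
    rw [← hfx', map_add]
  refine ⟨f, hf1, ?_, ?_⟩ <;> linarith

include hne in
lemma box (hF0 : F 0 = 0) {b₁ b₂ : X} {n m : ℕ} {s₁ s₂ : ℝ} (hnm : n ≠ m)
    (hb₁ : ‖b₁‖ ≤ 1) (hb₂ : ‖b₂‖ ≤ 1)
    (hFb₁ : F b₁ = lp.single 1 n s₁) (hFb₂ : F b₂ = lp.single 1 m s₂)
    (hs₁ : |s₁| = 1) (hs₂ : |s₂| = 1)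
    {α γ : ℝ} (hα : 0 ≤ α) (hγ : 0 ≤ γ) (hsum : α + γ ≤ 1) :
    ∃ ε, 0 ≤ ε ∧ ε ≤ α ∧ ε ≤ γ ∧
      F (α • b₁ + γ • b₂)
        = lp.single 1 n ((α - ε) * s₁) + lp.single 1 m ((γ - ε) * s₂) := by
  set z := α • b₁ + γ • b₂ with hz
  have hzn : ‖z‖ ≤ 1 := by
    calc ‖z‖ ≤ ‖α • b₁‖ + ‖γ • b₂‖ := norm_add_le _ _
      _ = α * ‖b₁‖ + γ * ‖b₂‖ := by
          rw [norm_smul, norm_smul, Real.norm_eq_abs, Real.norm_eq_abs,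
            abs_of_nonneg hα, abs_of_nonneg hγ]
      _ ≤ α * 1 + γ * 1 := by
          gcongr
      _ ≤ 1 := by linarith
  have hanchor₁ : F (α • b₁) = lp.single 1 n (α * s₁) :=
    ray F hne hF0 hb₁ hFb₁ hs₁ hα (by linarith)
  have hanchor₂ : F (γ • b₂) = lp.single 1 m (γ * s₂) :=
    ray F hne hF0 hb₂ hFb₂ hs₂ hγ (by linarith)
  have hαb : ‖α • b₁‖ ≤ 1 := by
    rw [norm_smul, Real.norm_eq_abs, abs_of_nonneg hα]
    calc α * ‖b₁‖ ≤ α * 1 := by gcongr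
      _ ≤ 1 := by linarith
  have hγb : ‖γ • b₂‖ ≤ 1 := by
    rw [norm_smul, Real.norm_eq_abs, abs_of_nonneg hγ]
    calc γ * ‖b₂‖ ≤ γ * 1 := by gcongr
      _ ≤ 1 := by linarith
  have hc₁ : ‖F z - lp.single 1 n (α * s₁)‖ ≤ γ := by
    have h := hne z (mem_cb hzn) (α • b₁) (mem_cb hαb)
    rw [hanchor₁] at h
    have e : z - α • b₁ = γ • b₂ := by rw [hz]; abel
    rw [e] at h
    calc ‖F z - lp.single 1 n (α * s₁)‖ ≤ ‖γ • b₂‖ := h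
      _ = γ * ‖b₂‖ := by rw [norm_smul, Real.norm_eq_abs, abs_of_nonneg hγ]
      _ ≤ γ * 1 := by gcongr
      _ = γ := mul_one γ
  have hc₂ : ‖F z - lp.single 1 m (γ * s₂)‖ ≤ α := by
    have h := hne z (mem_cb hzn) (γ • b₂) (mem_cb hγb)
    rw [hanchor₂] at h
    have e : z - γ • b₂ = α • b₁ := by rw [hz]; abel
    rw [e] at h
    calc ‖F z - lp.single 1 m (γ * s₂)‖ ≤ ‖α • b₁‖ := h
      _ = α * ‖b₁‖ := by rw [norm_smul, Real.norm_eq_abs, abs_of_nonneg hα]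
      _ ≤ α * 1 := by gcongr
      _ = α := mul_one α
  -- dissect
  set w := F z with hw
  set W := ‖w - lp.single 1 n ((w : ℕ → ℝ) n) - lp.single 1 m ((w : ℕ → ℝ) m)‖ with hW
  have hWnn : (0:ℝ) ≤ W := norm_nonneg _
  have e₁ : ‖w - lp.single 1 n (α * s₁)‖
      = |(w : ℕ → ℝ) n - α * s₁| + |(w : ℕ → ℝ) m| + W := by
    have h := norm_sub_single_pair w hnm (α * s₁) 0
    rw [single_zero', sub_zero, sub_zero] at h
    exact h
  have e₂ : ‖w - lp.single 1 m (γ * s₂)‖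
      = |(w : ℕ → ℝ) n| + |(w : ℕ → ℝ) m - γ * s₂| + W := by
    have h := norm_sub_single_pair w hnm 0 (γ * s₂)
    rw [single_zero', sub_zero, sub_zero] at h
    exact h
  set p := s₁ * (w : ℕ → ℝ) n with hp
  set q := s₂ * (w : ℕ → ℝ) m with hq
  have hs₁sq : s₁ * s₁ = 1 := by
    have := sq_abs s₁; rw [hs₁] at this; nlinarith
  have hs₂sq : s₂ * s₂ = 1 := by
    have := sq_abs s₂; rw [hs₂] at this; nlinarith
  have habs₁ : |(w : ℕ → ℝ) n| = |p| := by
    rw [hp, abs_mul, hs₁, one_mul]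
  have habs₂ : |(w : ℕ → ℝ) m| = |q| := by
    rw [hq, abs_mul, hs₂, one_mul]
  have habs₃ : |(w : ℕ → ℝ) n - α * s₁| = |p - α| := by
    have e : s₁ * ((w : ℕ → ℝ) n - α * s₁) = p - α := by
      rw [hp]; linear_combination (-α) * hs₁sq
    calc |(w : ℕ → ℝ) n - α * s₁| = |s₁| * |(w : ℕ → ℝ) n - α * s₁| := by
          rw [hs₁, one_mul]
      _ = |s₁ * ((w : ℕ → ℝ) n - α * s₁)| := (abs_mul _ _).symm
      _ = |p - α| := by rw [e]
  have habs₄ : |(w : ℕ → ℝ) m - γ * s₂| = |q - γ| := by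
    have e : s₂ * ((w : ℕ → ℝ) m - γ * s₂) = q - γ := by
      rw [hq]; linear_combination (-γ) * hs₂sq
    calc |(w : ℕ → ℝ) m - γ * s₂| = |s₂| * |(w : ℕ → ℝ) m - γ * s₂| := by
          rw [hs₂, one_mul]
      _ = |s₂ * ((w : ℕ → ℝ) m - γ * s₂)| := (abs_mul _ _).symm
      _ = |q - γ| := by rw [e]
  have g₁ : |p - α| + |q| + W ≤ γ := by
    rw [← habs₃, ← habs₂, ← e₁]; exact hc₁
  have g₂ : |p| + |q - γ| + W ≤ α := by
    rw [← habs₁, ← habs₄, ← e₂]; exact hc₂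
  have tri₁ : α ≤ |p| + |p - α| := by
    calc α = |α| := (abs_of_nonneg hα).symm
      _ = |p + (α - p)| := by ring_nf
      _ ≤ |p| + |α - p| := abs_add_le _ _
      _ = |p| + |p - α| := by rw [abs_sub_comm]
  have tri₂ : γ ≤ |q| + |q - γ| := by
    calc γ = |γ| := (abs_of_nonneg hγ).symm
      _ = |q + (γ - q)| := by ring_nf
      _ ≤ |q| + |γ - q| := abs_add_le _ _
      _ = |q| + |q - γ| := by rw [abs_sub_comm]
  have hW0 : W = 0 := by linarith
  -- p ∈ [0, α], q ∈ [0, γ], α - p = γ - q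
  have hpcases := abs_cases p
  have hqcases := abs_cases q
  have hpacases := abs_cases (p - α)
  have hqgcases := abs_cases (q - γ)
  have hp0 : 0 ≤ p ∧ p ≤ α := by constructor <;> rcases hpcases with ⟨h1,h2⟩|⟨h1,h2⟩ <;>
    rcases hpacases with ⟨h3,h4⟩|⟨h3,h4⟩ <;> linarith
  have hq0 : 0 ≤ q ∧ q ≤ γ := by constructor <;> rcases hqcases with ⟨h1,h2⟩|⟨h1,h2⟩ <;>
    rcases hqgcases with ⟨h3,h4⟩|⟨h3,h4⟩ <;> linarith
  have heps : α - p = γ - q := by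
    have a1 : |p| = p := abs_of_nonneg hp0.1
    have a2 : |q| = q := abs_of_nonneg hq0.1
    have a3 : |p - α| = α - p := by rw [abs_sub_comm]; exact abs_of_nonneg (by linarith [hp0.2])
    have a4 : |q - γ| = γ - q := by rw [abs_sub_comm]; exact abs_of_nonneg (by linarith [hq0.2])
    rw [a3, a2] at g₁
    rw [a1, a4] at g₂
    linarith
  refine ⟨α - p, by linarith [hp0.2], by linarith [hp0.1], by linarith [hq0.1, heps], ?_⟩
  have hwn : (w : ℕ → ℝ) n = (α - (α - p)) * s₁ := by
    have h2 : s₁ * p = (w : ℕ → ℝ) n := by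
      rw [hp, ← mul_assoc, hs₁sq, one_mul]
    linear_combination - h2
  have hwm : (w : ℕ → ℝ) m = (γ - (α - p)) * s₂ := by
    have h2 : s₂ * q = (w : ℕ → ℝ) m := by
      rw [hq, ← mul_assoc, hs₂sq, one_mul]
    linear_combination (- h2) + s₂ * heps
  have hweq : w = lp.single 1 n ((w : ℕ → ℝ) n) + lp.single 1 m ((w : ℕ → ℝ) m) :=
    eq_pair_of_rest_zero (by rw [← hW, hW0])
  rw [hweq, hwn, hwm]

/-- defect function for a pair of generators -/
def ev (F : X → L1) (b₁ b₂ : X) (n : ℕ) (s₁ : ℝ) (α γ : ℝ) : ℝ :=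
  α - s₁ * ((F (α • b₁ + γ • b₂) : ℕ → ℝ) n)

include hne in
lemma ev_box (hF0 : F 0 = 0) {b₁ b₂ : X} {n m : ℕ} {s₁ s₂ : ℝ} (hnm : n ≠ m)
    (hb₁ : ‖b₁‖ ≤ 1) (hb₂ : ‖b₂‖ ≤ 1)
    (hFb₁ : F b₁ = lp.single 1 n s₁) (hFb₂ : F b₂ = lp.single 1 m s₂)
    (hs₁ : |s₁| = 1) (hs₂ : |s₂| = 1)
    {α γ : ℝ} (hα : 0 ≤ α) (hγ : 0 ≤ γ) (hsum : α + γ ≤ 1) :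
    0 ≤ ev F b₁ b₂ n s₁ α γ ∧ ev F b₁ b₂ n s₁ α γ ≤ α ∧ ev F b₁ b₂ n s₁ α γ ≤ γ ∧
      F (α • b₁ + γ • b₂)
        = lp.single 1 n ((α - ev F b₁ b₂ n s₁ α γ) * s₁)
          + lp.single 1 m ((γ - ev F b₁ b₂ n s₁ α γ) * s₂) := by
  obtain ⟨ε, h0, h1, h2, heq⟩ :=
    box F hne hF0 hnm hb₁ hb₂ hFb₁ hFb₂ hs₁ hs₂ hα hγ hsum
  have hs₁sq : s₁ * s₁ = 1 := by
    have := sq_abs s₁; rw [hs₁] at this; nlinarith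
  have hev : ev F b₁ b₂ n s₁ α γ = ε := by
    unfold ev
    rw [heq, pair_coord_n hnm]
    have : s₁ * ((α - ε) * s₁) = α - ε := by
      linear_combination (α - ε) * hs₁sq
    rw [this]
    ring
  rw [hev]
  exact ⟨h0, h1, h2, heq⟩

include hne in
lemma ev_lip (hF0 : F 0 = 0) {b₁ b₂ : X} {n : ℕ} {s₁ : ℝ}
    (hb₁ : ‖b₁‖ ≤ 1) (hb₂ : ‖b₂‖ ≤ 1) (hs₁ : |s₁| = 1)
    {α γ α' γ' : ℝ} (hα : 0 ≤ α) (hγ : 0 ≤ γ) (hsum : α + γ ≤ 1)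
    (hα' : 0 ≤ α') (hγ' : 0 ≤ γ') (hsum' : α' + γ' ≤ 1) :
    |ev F b₁ b₂ n s₁ α γ - ev F b₁ b₂ n s₁ α' γ'| ≤ 2 * |α - α'| + |γ - γ'| := by
  set z := α • b₁ + γ • b₂ with hz
  set z' := α' • b₁ + γ' • b₂ with hz'
  have hzn : ‖z‖ ≤ 1 := by
    calc ‖z‖ ≤ ‖α • b₁‖ + ‖γ • b₂‖ := norm_add_le _ _
      _ = α * ‖b₁‖ + γ * ‖b₂‖ := by
          rw [norm_smul, norm_smul, Real.norm_eq_abs, Real.norm_eq_abs,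
            abs_of_nonneg hα, abs_of_nonneg hγ]
      _ ≤ α * 1 + γ * 1 := by gcongr
      _ ≤ 1 := by linarith
  have hzn' : ‖z'‖ ≤ 1 := by
    calc ‖z'‖ ≤ ‖α' • b₁‖ + ‖γ' • b₂‖ := norm_add_le _ _
      _ = α' * ‖b₁‖ + γ' * ‖b₂‖ := by
          rw [norm_smul, norm_smul, Real.norm_eq_abs, Real.norm_eq_abs,
            abs_of_nonneg hα', abs_of_nonneg hγ']
      _ ≤ α' * 1 + γ' * 1 := by gcongr
      _ ≤ 1 := by linarith
  have hdF : ‖F z - F z'‖ ≤ |α - α'| + |γ - γ'| := by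
    have h := hne z (mem_cb hzn) z' (mem_cb hzn')
    have e : z - z' = (α - α') • b₁ + (γ - γ') • b₂ := by
      rw [hz, hz', sub_smul, sub_smul]; abel
    calc ‖F z - F z'‖ ≤ ‖z - z'‖ := h
      _ = ‖(α - α') • b₁ + (γ - γ') • b₂‖ := by rw [e]
      _ ≤ ‖(α - α') • b₁‖ + ‖(γ - γ') • b₂‖ := norm_add_le _ _
      _ = |α - α'| * ‖b₁‖ + |γ - γ'| * ‖b₂‖ := by
          rw [norm_smul, norm_smul, Real.norm_eq_abs, Real.norm_eq_abs]
      _ ≤ |α - α'| * 1 + |γ - γ'| * 1 := by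
          have h1 := abs_nonneg (α - α')
          have h2 := abs_nonneg (γ - γ')
          have := mul_le_mul_of_nonneg_left hb₁ h1
          have := mul_le_mul_of_nonneg_left hb₂ h2
          linarith
      _ = |α - α'| + |γ - γ'| := by ring
  have hcoord : |((F z : ℕ → ℝ) n) - ((F z' : ℕ → ℝ) n)| ≤ ‖F z - F z'‖ := by
    have := coord_le_norm (F z - F z') n
    have e : ((F z - F z' : L1) : ℕ → ℝ) n = (F z : ℕ → ℝ) n - (F z' : ℕ → ℝ) n := by
      simp [lp.coeFn_sub]
    rw [e] at this
    exact this
  have expand : ev F b₁ b₂ n s₁ α γ - ev F b₁ b₂ n s₁ α' γ'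
      = (α - α') - s₁ * (((F z : ℕ → ℝ) n) - ((F z' : ℕ → ℝ) n)) := by
    unfold ev
    rw [← hz, ← hz']
    ring
  calc |ev F b₁ b₂ n s₁ α γ - ev F b₁ b₂ n s₁ α' γ'|
      = |(α - α') - s₁ * (((F z : ℕ → ℝ) n) - ((F z' : ℕ → ℝ) n))| := by rw [expand]
    _ ≤ |α - α'| + |s₁ * (((F z : ℕ → ℝ) n) - ((F z' : ℕ → ℝ) n))| := abs_sub _ _
    _ = |α - α'| + |((F z : ℕ → ℝ) n) - ((F z' : ℕ → ℝ) n)| := by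
        rw [abs_mul, hs₁, one_mul]
    _ ≤ |α - α'| + (|α - α'| + |γ - γ'|) := by
        have := le_trans hcoord hdF
        linarith
    _ = 2 * |α - α'| + |γ - γ'| := by ring

include hne in
lemma stair (hF0 : F 0 = 0) {v : X} {n m : ℕ} {s₁ s₂ a b : ℝ} (hnm : n ≠ m)
    (hv : ‖v‖ ≤ 1) (ha : 0 ≤ a) (hb : 0 ≤ b) (hab : a + b = 1)
    (hs₁ : |s₁| = 1) (hs₂ : |s₂| = 1)
    (hFv : F v = lp.single 1 n (a * s₁) + lp.single 1 m (b * s₂))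
    {τ : ℝ} (hτ0 : 0 ≤ τ) (hτ1 : τ ≤ 1) :
    ∃ c₁ c₂, 0 ≤ c₁ ∧ 0 ≤ c₂ ∧ c₁ + c₂ = τ ∧ c₁ ≤ a ∧ c₂ ≤ b ∧
      F (τ • v) = lp.single 1 n (c₁ * s₁) + lp.single 1 m (c₂ * s₂) := by
  set y : L1 := lp.single 1 n (a * s₁) + lp.single 1 m (b * s₂) with hy
  have hynorm : ‖y‖ = 1 := by
    rw [hy, norm_pair hnm, abs_mul, abs_mul, hs₁, hs₂, mul_one, mul_one,
      abs_of_nonneg ha, abs_of_nonneg hb, hab]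
  set w := F (τ • v) with hw
  have hτv : ‖τ • v‖ ≤ τ := by
    rw [norm_smul, Real.norm_eq_abs, abs_of_nonneg hτ0]
    calc τ * ‖v‖ ≤ τ * 1 := by gcongr
      _ = τ := mul_one τ
  have hτv1 : ‖τ • v‖ ≤ 1 := le_trans hτv hτ1
  have hw1 : ‖w‖ ≤ τ := le_trans (F_norm_le F hne hF0 hτv1) hτv
  have hw2 : ‖w - y‖ ≤ 1 - τ := by
    have h := hne (τ • v) (mem_cb hτv1) v (mem_cb hv)
    rw [hFv] at h
    calc ‖w - y‖ ≤ ‖τ • v - v‖ := h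
      _ = ‖(τ - 1) • v‖ := by rw [sub_smul, one_smul]
      _ = |τ - 1| * ‖v‖ := by rw [norm_smul, Real.norm_eq_abs]
      _ ≤ |τ - 1| * 1 := by gcongr
      _ = 1 - τ := by rw [mul_one, abs_of_nonpos (by linarith)]; ring
  -- dissect
  set W := ‖w - lp.single 1 n ((w : ℕ → ℝ) n) - lp.single 1 m ((w : ℕ → ℝ) m)‖ with hW
  have hWnn : (0:ℝ) ≤ W := norm_nonneg _
  have e₀ : ‖w‖ = |(w : ℕ → ℝ) n| + |(w : ℕ → ℝ) m| + W := norm_split_pair hnm w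
  have e₁ : ‖w - y‖
      = |(w : ℕ → ℝ) n - a * s₁| + |(w : ℕ → ℝ) m - b * s₂| + W := by
    rw [hy, ← sub_sub]
    exact norm_sub_single_pair w hnm (a * s₁) (b * s₂)
  have tri₁ : a ≤ |(w : ℕ → ℝ) n| + |(w : ℕ → ℝ) n - a * s₁| := by
    have h1 : |a * s₁| = a := by rw [abs_mul, hs₁, mul_one, abs_of_nonneg ha]
    calc a = |a * s₁| := h1.symm
      _ = |(w : ℕ → ℝ) n + (a * s₁ - (w : ℕ → ℝ) n)| := by ring_nf
      _ ≤ |(w : ℕ → ℝ) n| + |a * s₁ - (w : ℕ → ℝ) n| := abs_add_le _ _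
      _ = |(w : ℕ → ℝ) n| + |(w : ℕ → ℝ) n - a * s₁| := by rw [abs_sub_comm]
  have tri₂ : b ≤ |(w : ℕ → ℝ) m| + |(w : ℕ → ℝ) m - b * s₂| := by
    have h1 : |b * s₂| = b := by rw [abs_mul, hs₂, mul_one, abs_of_nonneg hb]
    calc b = |b * s₂| := h1.symm
      _ = |(w : ℕ → ℝ) m + (b * s₂ - (w : ℕ → ℝ) m)| := by ring_nf
      _ ≤ |(w : ℕ → ℝ) m| + |b * s₂ - (w : ℕ → ℝ) m| := abs_add_le _ _
      _ = |(w : ℕ → ℝ) m| + |(w : ℕ → ℝ) m - b * s₂| := by rw [abs_sub_comm]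
  have hW0 : W = 0 := by
    have g0 : |(w : ℕ → ℝ) n| + |(w : ℕ → ℝ) m| + W ≤ τ := by rw [← e₀]; exact hw1
    have g1 : |(w : ℕ → ℝ) n - a * s₁| + |(w : ℕ → ℝ) m - b * s₂| + W ≤ 1 - τ := by
      rw [← e₁]; exact hw2
    linarith
  have hwτ : ‖w‖ = τ := by
    have : ‖y‖ ≤ ‖w‖ + ‖y - w‖ := by
      have e : w + (y - w) = y := by abel
      calc ‖y‖ = ‖w + (y - w)‖ := by rw [e]
        _ ≤ ‖w‖ + ‖y - w‖ := norm_add_le _ _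
    rw [hynorm, norm_sub_rev] at this
    linarith
  -- signs
  have hs₁sq : s₁ * s₁ = 1 := by
    have := sq_abs s₁; rw [hs₁] at this; nlinarith
  have hs₂sq : s₂ * s₂ = 1 := by
    have := sq_abs s₂; rw [hs₂] at this; nlinarith
  set p := s₁ * (w : ℕ → ℝ) n with hp
  set q := s₂ * (w : ℕ → ℝ) m with hq
  have habs₁ : |(w : ℕ → ℝ) n| = |p| := by rw [hp, abs_mul, hs₁, one_mul]
  have habs₂ : |(w : ℕ → ℝ) m| = |q| := by rw [hq, abs_mul, hs₂, one_mul]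
  have habs₃ : |(w : ℕ → ℝ) n - a * s₁| = |p - a| := by
    have e : s₁ * ((w : ℕ → ℝ) n - a * s₁) = p - a := by
      rw [hp]; linear_combination (-a) * hs₁sq
    calc |(w : ℕ → ℝ) n - a * s₁| = |s₁| * |(w : ℕ → ℝ) n - a * s₁| := by
          rw [hs₁, one_mul]
      _ = |s₁ * ((w : ℕ → ℝ) n - a * s₁)| := (abs_mul _ _).symm
      _ = |p - a| := by rw [e]
  have habs₄ : |(w : ℕ → ℝ) m - b * s₂| = |q - b| := by
    have e : s₂ * ((w : ℕ → ℝ) m - b * s₂) = q - b := by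
      rw [hq]; linear_combination (-b) * hs₂sq
    calc |(w : ℕ → ℝ) m - b * s₂| = |s₂| * |(w : ℕ → ℝ) m - b * s₂| := by
          rw [hs₂, one_mul]
      _ = |s₂ * ((w : ℕ → ℝ) m - b * s₂)| := (abs_mul _ _).symm
      _ = |q - b| := by rw [e]
  have g0 : |p| + |q| = τ := by
    have := e₀
    rw [hwτ, habs₁, habs₂, hW0] at this
    linarith
  have g1 : |p - a| + |q - b| ≤ 1 - τ := by
    have := e₁ ▸ hw2
    rw [habs₃, habs₄, hW0] at this
    linarith
  have tri₁' : a ≤ |p| + |p - a| := by rw [← habs₁, ← habs₃]; exact tri₁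
  have tri₂' : b ≤ |q| + |q - b| := by rw [← habs₂, ← habs₄]; exact tri₂
  have hpq : 0 ≤ p ∧ p ≤ a ∧ 0 ≤ q ∧ q ≤ b := by
    rcases abs_cases p with ⟨h1,h2⟩|⟨h1,h2⟩ <;>
    rcases abs_cases q with ⟨h3,h4⟩|⟨h3,h4⟩ <;>
    rcases abs_cases (p - a) with ⟨h5,h6⟩|⟨h5,h6⟩ <;>
    rcases abs_cases (q - b) with ⟨h7,h8⟩|⟨h7,h8⟩ <;>
    refine ⟨by linarith, by linarith, by linarith, by linarith⟩
  refine ⟨p, q, hpq.1, hpq.2.2.1, ?_, hpq.2.1, hpq.2.2.2, ?_⟩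
  · rw [abs_of_nonneg hpq.1, abs_of_nonneg hpq.2.2.1] at g0
    exact g0
  · have hwn : (w : ℕ → ℝ) n = p * s₁ := by
      rw [hp]; linear_combination ((w : ℕ → ℝ) n) * hs₁sq.symm
    have hwm : (w : ℕ → ℝ) m = q * s₂ := by
      rw [hq]; linear_combination ((w : ℕ → ℝ) m) * hs₂sq.symm
    have hweq : w = lp.single 1 n ((w : ℕ → ℝ) n) + lp.single 1 m ((w : ℕ → ℝ) m) :=
      eq_pair_of_rest_zero (by rw [← hW, hW0])
    rw [hweq, hwn, hwm]

include hbij hne in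
lemma edge (hF0 : F 0 = 0) {b₁ b₂ : X} {n m : ℕ} {s₁ s₂ : ℝ} (hnm : n ≠ m)
    (hb₁ : ‖b₁‖ ≤ 1) (hb₂ : ‖b₂‖ ≤ 1)
    (hFb₁ : F b₁ = lp.single 1 n s₁) (hFb₂ : F b₂ = lp.single 1 m s₂)
    (hs₁ : |s₁| = 1) (hs₂ : |s₂| = 1)
    {t : ℝ} (ht0 : 0 ≤ t) (ht1 : t ≤ 1) :
    F (t • b₁ + (1 - t) • b₂)
      = lp.single 1 n (t * s₁) + lp.single 1 m ((1 - t) * s₂) := by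
  have hs₁0 : s₁ ≠ 0 := by intro h; rw [h] at hs₁; simp at hs₁
  have hs₂0 : s₂ ≠ 0 := by intro h; rw [h] at hs₂; simp at hs₂
  have boxF : ∀ α γ : ℝ, 0 ≤ α → 0 ≤ γ → α + γ ≤ 1 →
      0 ≤ ev F b₁ b₂ n s₁ α γ ∧ ev F b₁ b₂ n s₁ α γ ≤ α ∧ ev F b₁ b₂ n s₁ α γ ≤ γ ∧
      F (α • b₁ + γ • b₂)
        = lp.single 1 n ((α - ev F b₁ b₂ n s₁ α γ) * s₁)
          + lp.single 1 m ((γ - ev F b₁ b₂ n s₁ α γ) * s₂) :=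
    fun α γ hα hγ hsum => ev_box F hne hF0 hnm hb₁ hb₂ hFb₁ hFb₂ hs₁ hs₂ hα hγ hsum
  have βcont : ContinuousOn (fun u : ℝ => ev F b₁ b₂ n s₁ u (1 - u)) (Icc 0 1) := by
    apply contOn_of_lip (C := 3) (by norm_num)
    intro x hx y hy
    obtain ⟨hx0, hx1⟩ := hx
    obtain ⟨hy0, hy1⟩ := hy
    have h := ev_lip F hne hF0 hb₁ hb₂ hs₁ (n := n) (α := x) (γ := 1 - x) (α' := y) (γ' := 1 - y)
      hx0 (by linarith) (by linarith) hy0 (by linarith) (by linarith)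
    have e : |(1 - x) - (1 - y)| = |x - y| := by
      rw [show (1 - x) - (1 - y) = -(x - y) by ring, abs_neg]
    rw [e] at h
    linarith
  obtain ⟨th, hth, hmax⟩ := isCompact_Icc.exists_isMaxOn
    (Set.nonempty_Icc.mpr (by norm_num : (0:ℝ) ≤ 1)) βcont
  have hmax' : ∀ u ∈ Icc (0:ℝ) 1,
      ev F b₁ b₂ n s₁ u (1 - u) ≤ ev F b₁ b₂ n s₁ th (1 - th) :=
    fun u hu => hmax hu
  obtain ⟨hth0, hth1⟩ := hth
  suffices hB : ev F b₁ b₂ n s₁ th (1 - th) ≤ 0 by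
    obtain ⟨h0, _, _, heq⟩ := boxF t (1 - t) ht0 (by linarith) (by linarith)
    have h00 : ev F b₁ b₂ n s₁ t (1 - t) = 0 :=
      le_antisymm (le_trans (hmax' t ⟨ht0, ht1⟩) hB) h0
    rw [h00, sub_zero, sub_zero] at heq
    exact heq
  by_contra hBpos'
  push_neg at hBpos'
  obtain ⟨hB0, hBth, hBth', hBeq⟩ := boxF th (1 - th) hth0 (by linarith) (by linarith)
  have hth0' : (0:ℝ) < th := lt_of_lt_of_le hBpos' hBth
  have hth1' : th < 1 := by
    have := lt_of_lt_of_le hBpos' hBth'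
    linarith
  -- B < 1/2
  have hBhalf : ev F b₁ b₂ n s₁ th (1 - th) < 1/2 := by
    by_contra hh
    push_neg at hh
    have e1 : ev F b₁ b₂ n s₁ th (1 - th) = 1/2 := by
      apply le_antisymm _ hh
      linarith
    have e2 : th = 1/2 := by linarith
    have hzero : F (th • b₁ + (1 - th) • b₂) = 0 := by
      rw [hBeq, e1, e2]
      norm_num
    have hzmem : th • b₁ + (1 - th) • b₂ ∈ closedBall (0:X) 1 := by
      apply mem_cb
      calc ‖th • b₁ + (1 - th) • b₂‖ ≤ ‖th • b₁‖ + ‖(1 - th) • b₂‖ := norm_add_le _ _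
        _ = |th| * ‖b₁‖ + |1 - th| * ‖b₂‖ := by
            rw [norm_smul, norm_smul, Real.norm_eq_abs, Real.norm_eq_abs]
        _ ≤ |th| * 1 + |1 - th| * 1 := by
            have := abs_nonneg th
            have := abs_nonneg (1 - th)
            have := mul_le_mul_of_nonneg_left hb₁ (abs_nonneg th)
            have := mul_le_mul_of_nonneg_left hb₂ (abs_nonneg (1 - th))
            linarith
        _ = 1 := by
            rw [abs_of_nonneg (by linarith : (0:ℝ) ≤ th),
              abs_of_nonneg (by linarith : (0:ℝ) ≤ 1 - th)]
            ring
    have hz0 : th • b₁ + (1 - th) • b₂ = 0 := by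
      apply hbij.injOn hzmem (mem_cb (by simp))
      rw [hzero, hF0]
    have hbb : b₁ = -b₂ := by
      rw [e2] at hz0
      have h2 : (2:ℝ) • ((1/2 : ℝ) • b₁ + (1 - 1/2 : ℝ) • b₂) = b₁ + b₂ := by
        rw [smul_add, smul_smul, smul_smul]
        norm_num
      rw [hz0, smul_zero] at h2
      have := h2.symm
      have h3 := congrArg (fun z => z - b₂) this
      simpa using h3
    have : (lp.single 1 n s₁ : L1) = lp.single 1 m (-s₂) := by
      rw [← hFb₁, hbb]
      exact opp F hbij hne hF0 hb₂ hFb₂ hs₂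
    have hcoord := congrArg (fun u : L1 => (u : ℕ → ℝ) n) this
    simp only [lp.single_apply_self,
      lp.single_apply_ne (E := fun _ : ℕ => ℝ) 1 m (-s₂) hnm] at hcoord
    exact hs₁0 hcoord
  -- the sphere point y and its preimage v
  set y : L1 := lp.single 1 n (th * s₁) + lp.single 1 m ((1 - th) * s₂) with hy
  have hynorm : ‖y‖ = 1 := by
    rw [hy, norm_pair hnm, abs_mul, abs_mul, hs₁, hs₂, mul_one, mul_one,
      abs_of_nonneg (le_of_lt hth0'), abs_of_nonneg (by linarith : (0:ℝ) ≤ 1 - th)]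
    ring
  obtain ⟨v, hvmem, hFv⟩ := hbij.surjOn (mem_cb' (le_of_eq hynorm))
  have hv : ‖v‖ ≤ 1 := by simpa [mem_closedBall_zero_iff] using hvmem
  -- the key sub-argument : v cannot be a nonnegative combination of b₁, b₂
  have key : ∀ A Γ : ℝ, 0 ≤ A → 0 ≤ Γ → v = A • b₁ + Γ • b₂ → False := by
    intro A Γ hA hΓ hvAB
    obtain ⟨f, hf1, hfb₁, hfb₂⟩ :=
      pair_func F hbij hne hF0 hnm hb₁ hb₂ hFb₁ hFb₂ hs₁ hs₂
    have hfv : f v = A + Γ := by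
      rw [hvAB, map_add, map_smul, map_smul, hfb₁, hfb₂]
      simp
    have hAΓ : A + Γ ≤ 1 := by
      have h := f.le_opNorm v
      rw [hf1, one_mul] at h
      have h2 : |f v| ≤ ‖v‖ := by rwa [← Real.norm_eq_abs]
      rw [hfv] at h2
      calc A + Γ ≤ |A + Γ| := le_abs_self _
        _ ≤ ‖v‖ := h2
        _ ≤ 1 := hv
    obtain ⟨h0', h1', h2', heq'⟩ := boxF A Γ hA hΓ hAΓ
    rw [← hvAB, hFv, hy] at heq'
    obtain ⟨e₁, e₂⟩ := pair_eq_iff hnm heq'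
    have et : th = A - ev F b₁ b₂ n s₁ A Γ := mul_right_cancel₀ hs₁0 e₁
    have eu : 1 - th = Γ - ev F b₁ b₂ n s₁ A Γ := mul_right_cancel₀ hs₂0 e₂
    have hε0 : ev F b₁ b₂ n s₁ A Γ = 0 := by
      apply le_antisymm _ h0'
      linarith
    have hA' : A = th := by linarith
    have hΓ' : Γ = 1 - th := by linarith
    have hFth : F (th • b₁ + (1 - th) • b₂) = y := by
      have e : th • b₁ + (1 - th) • b₂ = v := by rw [hvAB, hA', hΓ']
      rw [e, hFv]
    rw [hBeq, hy] at hFth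
    obtain ⟨e₃, _⟩ := pair_eq_iff hnm hFth
    have : th - ev F b₁ b₂ n s₁ th (1 - th) = th := mul_right_cancel₀ hs₁0 e₃
    linarith
  -- the staircase at τ*
  set τ : ℝ := (1 - 2 * ev F b₁ b₂ n s₁ th (1 - th)) / 2 with hτ
  have hτpos : 0 < τ := by rw [hτ]; linarith
  have hτle : τ ≤ 1 := by rw [hτ]; linarith
  obtain ⟨c₁, c₂, hc₁, hc₂, hcsum, hc₁le, hc₂le, hκ⟩ :=
    stair F hne hF0 hnm hv (le_of_lt hth0') (by linarith : (0:ℝ) ≤ 1 - th)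
      (by ring) hs₁ hs₂ (by rw [hFv, hy]) (le_of_lt hτpos) hτle
  rcases eq_or_lt_of_le hc₁ with hc₁z | hc₁pos
  · -- c₁ = 0 : then τ • v = c₂ • b₂
    have hc₂τ : c₂ = τ := by linarith
    have hra : F (c₂ • b₂) = lp.single 1 m (c₂ * s₂) :=
      ray F hne hF0 hb₂ hFb₂ hs₂ hc₂ (by linarith)
    have hmem1 : τ • v ∈ closedBall (0:X) 1 := by
      apply mem_cb
      rw [norm_smul, Real.norm_eq_abs, abs_of_pos hτpos]
      calc τ * ‖v‖ ≤ τ * 1 := by gcongr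
        _ ≤ 1 := by linarith
    have hmem2 : c₂ • b₂ ∈ closedBall (0:X) 1 := by
      apply mem_cb
      rw [norm_smul, Real.norm_eq_abs, abs_of_nonneg hc₂]
      calc c₂ * ‖b₂‖ ≤ c₂ * 1 := by gcongr
        _ ≤ 1 := by rw [hc₂τ] at *; linarith
    have hFeq : F (τ • v) = F (c₂ • b₂) := by
      rw [hκ, hra, ← hc₁z, zero_mul, single_zero', zero_add]
    have hveq : τ • v = c₂ • b₂ := hbij.injOn hmem1 hmem2 hFeq
    have hvrep : v = (0:ℝ) • b₁ + (τ⁻¹ * c₂) • b₂ := by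
      have : v = τ⁻¹ • (τ • v) := by
        rw [smul_smul, inv_mul_cancel₀ (ne_of_gt hτpos), one_smul]
      rw [this, hveq, smul_smul, zero_smul, zero_add]
    exact key 0 (τ⁻¹ * c₂) le_rfl
      (mul_nonneg (le_of_lt (inv_pos.mpr hτpos)) hc₂) hvrep
  rcases eq_or_lt_of_le hc₂ with hc₂z | hc₂pos
  · -- c₂ = 0
    have hc₁τ : c₁ = τ := by linarith
    have hra : F (c₁ • b₁) = lp.single 1 n (c₁ * s₁) :=
      ray F hne hF0 hb₁ hFb₁ hs₁ (le_of_lt hc₁pos) (by linarith)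
    have hmem1 : τ • v ∈ closedBall (0:X) 1 := by
      apply mem_cb
      rw [norm_smul, Real.norm_eq_abs, abs_of_pos hτpos]
      calc τ * ‖v‖ ≤ τ * 1 := by gcongr
        _ ≤ 1 := by linarith
    have hmem2 : c₁ • b₁ ∈ closedBall (0:X) 1 := by
      apply mem_cb
      rw [norm_smul, Real.norm_eq_abs, abs_of_pos hc₁pos]
      calc c₁ * ‖b₁‖ ≤ c₁ * 1 := by gcongr
        _ ≤ 1 := by rw [hc₁τ] at *; linarith
    have hFeq : F (τ • v) = F (c₁ • b₁) := by
      rw [hκ, hra, ← hc₂z, zero_mul, single_zero', add_zero]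
    have hveq : τ • v = c₁ • b₁ := hbij.injOn hmem1 hmem2 hFeq
    have hvrep : v = (τ⁻¹ * c₁) • b₁ + (0:ℝ) • b₂ := by
      have : v = τ⁻¹ • (τ • v) := by
        rw [smul_smul, inv_mul_cancel₀ (ne_of_gt hτpos), one_smul]
      rw [this, hveq, smul_smul, zero_smul, add_zero]
    exact key (τ⁻¹ * c₁) 0
      (mul_nonneg (le_of_lt (inv_pos.mpr hτpos)) (le_of_lt hc₁pos)) le_rfl hvrep
  -- main case : both c₁ c₂ > 0
  set d : ℝ := c₁ - c₂ with hd
  have hdlt : |d| < τ := by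
    rw [hd, abs_lt]
    constructor <;> linarith
  have hdnn : (0:ℝ) ≤ |d| := abs_nonneg d
  -- admissibility of the IVT path
  have hadm : ∀ σ ∈ Icc |d| 1,
      0 ≤ (σ + d)/2 ∧ 0 ≤ (σ - d)/2 ∧ (σ + d)/2 + (σ - d)/2 ≤ 1 := by
    intro σ hσ
    obtain ⟨hσ1, hσ2⟩ := hσ
    have h1 := neg_abs_le d
    have h2 := le_abs_self d
    refine ⟨by linarith, by linarith, by linarith⟩
  have Mcont : ContinuousOn
      (fun σ : ℝ => σ - 2 * ev F b₁ b₂ n s₁ ((σ + d)/2) ((σ - d)/2)) (Icc |d| 1) := by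
    apply contOn_of_lip (C := 4) (by norm_num)
    intro x hx y' hy'
    obtain ⟨hxa, hxb, hxc⟩ := hadm x hx
    obtain ⟨hya, hyb, hyc⟩ := hadm y' hy'
    have h := ev_lip F hne hF0 hb₁ hb₂ hs₁ (n := n)
      (α := (x + d)/2) (γ := (x - d)/2) (α' := (y' + d)/2) (γ' := (y' - d)/2)
      hxa hxb (by linarith) hya hyb (by linarith)
    have e1 : |(x + d)/2 - (y' + d)/2| = |x - y'| / 2 := by
      rw [show (x + d)/2 - (y' + d)/2 = (x - y')/2 by ring, abs_div]
      norm_num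
    have e2 : |(x - d)/2 - (y' - d)/2| = |x - y'| / 2 := by
      rw [show (x - d)/2 - (y' - d)/2 = (x - y')/2 by ring, abs_div]
      norm_num
    rw [e1, e2] at h
    have habs := abs_sub_abs_le_abs_sub x y'
    calc |(fun σ : ℝ => σ - 2 * ev F b₁ b₂ n s₁ ((σ + d)/2) ((σ - d)/2)) x -
          (fun σ : ℝ => σ - 2 * ev F b₁ b₂ n s₁ ((σ + d)/2) ((σ - d)/2)) y'|
        = |(x - y') - 2 * (ev F b₁ b₂ n s₁ ((x + d)/2) ((x - d)/2)
            - ev F b₁ b₂ n s₁ ((y' + d)/2) ((y' - d)/2))| := by ring_nf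
      _ ≤ |x - y'| + 2 * |ev F b₁ b₂ n s₁ ((x + d)/2) ((x - d)/2)
            - ev F b₁ b₂ n s₁ ((y' + d)/2) ((y' - d)/2)| := by
          have := abs_sub (x - y') (2 * (ev F b₁ b₂ n s₁ ((x + d)/2) ((x - d)/2)
            - ev F b₁ b₂ n s₁ ((y' + d)/2) ((y' - d)/2)))
          rw [abs_mul] at this
          simpa using this
      _ ≤ |x - y'| + 2 * (2 * (|x - y'| / 2) + |x - y'| / 2) := by linarith
      _ = 4 * |x - y'| := by ring
  -- values of M at the endpoints
  have hM0 : (fun σ : ℝ => σ - 2 * ev F b₁ b₂ n s₁ ((σ + d)/2) ((σ - d)/2)) |d| = |d| := by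
    obtain ⟨ha1, ha2, ha3⟩ := hadm |d| ⟨le_rfl, by linarith⟩
    obtain ⟨g0, g1, g2, _⟩ := boxF ((|d| + d)/2) ((|d| - d)/2) ha1 ha2 ha3
    have hmin : ev F b₁ b₂ n s₁ ((|d| + d)/2) ((|d| - d)/2) = 0 := by
      rcases abs_cases d with ⟨hc, _⟩ | ⟨hc, _⟩
      · apply le_antisymm _ g0
        calc ev F b₁ b₂ n s₁ ((|d| + d)/2) ((|d| - d)/2) ≤ (|d| - d)/2 := g2
          _ = 0 := by rw [hc]; ring
      · apply le_antisymm _ g0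
        calc ev F b₁ b₂ n s₁ ((|d| + d)/2) ((|d| - d)/2) ≤ (|d| + d)/2 := g1
          _ = 0 := by rw [hc]; ring
    simp only [hmin]
    ring
  have hM1 : 2 * τ ≤ (fun σ : ℝ => σ - 2 * ev F b₁ b₂ n s₁ ((σ + d)/2) ((σ - d)/2)) 1 := by
    have hmem : (1 + d)/2 ∈ Icc (0:ℝ) 1 := by
      constructor <;> [linarith [neg_abs_le d, hdlt, hτle]; linarith [le_abs_self d, hdlt, hτle]]
    have hle := hmax' ((1 + d)/2) hmem
    have e : 1 - (1 + d)/2 = (1 - d)/2 := by ring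
    rw [e] at hle
    simp only []
    rw [hτ]
    linarith
  -- IVT
  have hsub := intermediate_value_Icc (by linarith : |d| ≤ 1) Mcont
  have hτmem : τ ∈ Icc
      ((fun σ : ℝ => σ - 2 * ev F b₁ b₂ n s₁ ((σ + d)/2) ((σ - d)/2)) |d|)
      ((fun σ : ℝ => σ - 2 * ev F b₁ b₂ n s₁ ((σ + d)/2) ((σ - d)/2)) 1) := by
    rw [hM0]
    exact ⟨le_of_lt hdlt, by linarith⟩
  obtain ⟨σ, hσmem, hσval⟩ := hsub hτmem
  obtain ⟨hσ1, hσ2⟩ := hσmem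
  obtain ⟨ha1, ha2, ha3⟩ := hadm σ ⟨hσ1, hσ2⟩
  obtain ⟨g0, g1, g2, geq⟩ := boxF ((σ + d)/2) ((σ - d)/2) ha1 ha2 ha3
  simp only [] at hσval
  -- coefficients match c₁ c₂
  have hco₁ : (σ + d)/2 - ev F b₁ b₂ n s₁ ((σ + d)/2) ((σ - d)/2) = c₁ := by
    rw [hd] at *
    linarith
  have hco₂ : (σ - d)/2 - ev F b₁ b₂ n s₁ ((σ + d)/2) ((σ - d)/2) = c₂ := by
    rw [hd] at *
    linarith
  rw [hco₁, hco₂] at geq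
  -- injectivity clash
  have hmem1 : ((σ + d)/2) • b₁ + ((σ - d)/2) • b₂ ∈ closedBall (0:X) 1 := by
    apply mem_cb
    calc ‖((σ + d)/2) • b₁ + ((σ - d)/2) • b₂‖
        ≤ ‖((σ + d)/2) • b₁‖ + ‖((σ - d)/2) • b₂‖ := norm_add_le _ _
      _ = (σ + d)/2 * ‖b₁‖ + (σ - d)/2 * ‖b₂‖ := by
          rw [norm_smul, norm_smul, Real.norm_eq_abs, Real.norm_eq_abs,
            abs_of_nonneg ha1, abs_of_nonneg ha2]
      _ ≤ (σ + d)/2 * 1 + (σ - d)/2 * 1 := by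
          have := mul_le_mul_of_nonneg_left hb₁ ha1
          have := mul_le_mul_of_nonneg_left hb₂ ha2
          linarith
      _ ≤ 1 := by linarith
  have hmem2 : τ • v ∈ closedBall (0:X) 1 := by
    apply mem_cb
    rw [norm_smul, Real.norm_eq_abs, abs_of_pos hτpos]
    calc τ * ‖v‖ ≤ τ * 1 := by gcongr
      _ ≤ 1 := by linarith
  have hFeq : F (((σ + d)/2) • b₁ + ((σ - d)/2) • b₂) = F (τ • v) := by
    rw [geq, hκ]
  have hzeq : ((σ + d)/2) • b₁ + ((σ - d)/2) • b₂ = τ • v :=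
    hbij.injOn hmem1 hmem2 hFeq
  have hvrep : v = (τ⁻¹ * ((σ + d)/2)) • b₁ + (τ⁻¹ * ((σ - d)/2)) • b₂ := by
    have h1 : v = τ⁻¹ • (τ • v) := by
      rw [smul_smul, inv_mul_cancel₀ (ne_of_gt hτpos), one_smul]
    rw [h1, ← hzeq, smul_add, smul_smul, smul_smul]
  exact key (τ⁻¹ * ((σ + d)/2)) (τ⁻¹ * ((σ - d)/2))
    (mul_nonneg (le_of_lt (inv_pos.mpr hτpos)) ha1)
    (mul_nonneg (le_of_lt (inv_pos.mpr hτpos)) ha2) hvrep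

include hbij hne in
lemma pair_full (hF0 : F 0 = 0) {b₁ b₂ : X} {n m : ℕ} {s₁ s₂ : ℝ} (hnm : n ≠ m)
    (hb₁ : ‖b₁‖ ≤ 1) (hb₂ : ‖b₂‖ ≤ 1)
    (hFb₁ : F b₁ = lp.single 1 n s₁) (hFb₂ : F b₂ = lp.single 1 m s₂)
    (hs₁ : |s₁| = 1) (hs₂ : |s₂| = 1)
    {α γ : ℝ} (hα : 0 ≤ α) (hγ : 0 ≤ γ) (hsum : α + γ ≤ 1) :
    F (α • b₁ + γ • b₂) = lp.single 1 n (α * s₁) + lp.single 1 m (γ * s₂) := by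
  set δ : ℝ := (1 - α - γ)/2 with hδdef
  have hδ : 0 ≤ δ := by rw [hδdef]; linarith
  have hedge := edge F hbij hne hF0 hnm hb₁ hb₂ hFb₁ hFb₂ hs₁ hs₂
    (t := α + δ) (by linarith) (by rw [hδdef]; linarith)
  have e : (1:ℝ) - (α + δ) = γ + δ := by rw [hδdef]; ring
  rw [e] at hedge
  obtain ⟨h0, h1, h2, heq⟩ := ev_box F hne hF0 hnm hb₁ hb₂ hFb₁ hFb₂ hs₁ hs₂ hα hγ hsum
  -- compare the two values
  have hzmem : α • b₁ + γ • b₂ ∈ closedBall (0:X) 1 := by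
    apply mem_cb
    calc ‖α • b₁ + γ • b₂‖ ≤ ‖α • b₁‖ + ‖γ • b₂‖ := norm_add_le _ _
      _ = α * ‖b₁‖ + γ * ‖b₂‖ := by
          rw [norm_smul, norm_smul, Real.norm_eq_abs, Real.norm_eq_abs,
            abs_of_nonneg hα, abs_of_nonneg hγ]
      _ ≤ α * 1 + γ * 1 := by
          have := mul_le_mul_of_nonneg_left hb₁ hα
          have := mul_le_mul_of_nonneg_left hb₂ hγ
          linarith
      _ ≤ 1 := by linarith
  have hzmem' : (α + δ) • b₁ + (γ + δ) • b₂ ∈ closedBall (0:X) 1 := by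
    apply mem_cb
    calc ‖(α + δ) • b₁ + (γ + δ) • b₂‖ ≤ ‖(α + δ) • b₁‖ + ‖(γ + δ) • b₂‖ := norm_add_le _ _
      _ = (α + δ) * ‖b₁‖ + (γ + δ) * ‖b₂‖ := by
          rw [norm_smul, norm_smul, Real.norm_eq_abs, Real.norm_eq_abs,
            abs_of_nonneg (by linarith), abs_of_nonneg (by linarith)]
      _ ≤ (α + δ) * 1 + (γ + δ) * 1 := by
          have := mul_le_mul_of_nonneg_left hb₁ (by linarith : (0:ℝ) ≤ α + δ)
          have := mul_le_mul_of_nonneg_left hb₂ (by linarith : (0:ℝ) ≤ γ + δ)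
          linarith
      _ ≤ 1 := by rw [hδdef]; ring_nf; linarith
  have hd := hne _ hzmem _ hzmem'
  rw [heq, hedge, pair_sub] at hd
  have edist : α • b₁ + γ • b₂ - ((α + δ) • b₁ + (γ + δ) • b₂)
      = (-δ) • b₁ + (-δ) • b₂ := by
    rw [add_smul, add_smul, neg_smul, neg_smul]
    abel
  rw [edist] at hd
  have hrhs : ‖(-δ) • b₁ + (-δ) • b₂‖ ≤ 2 * δ := by
    calc ‖(-δ) • b₁ + (-δ) • b₂‖ ≤ ‖(-δ) • b₁‖ + ‖(-δ) • b₂‖ := norm_add_le _ _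
      _ = |(-δ)| * ‖b₁‖ + |(-δ)| * ‖b₂‖ := by
          rw [norm_smul, norm_smul, Real.norm_eq_abs]
      _ ≤ δ * 1 + δ * 1 := by
          rw [abs_neg, abs_of_nonneg hδ]
          have := mul_le_mul_of_nonneg_left hb₁ hδ
          have := mul_le_mul_of_nonneg_left hb₂ hδ
          linarith
      _ = 2 * δ := by ring
  have hlhs : ‖(lp.single 1 n ((α - ev F b₁ b₂ n s₁ α γ) * s₁ - (α + δ) * s₁)
      + lp.single 1 m ((γ - ev F b₁ b₂ n s₁ α γ) * s₂ - (γ + δ) * s₂) : L1)‖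
      = 2 * (ev F b₁ b₂ n s₁ α γ + δ) := by
    rw [norm_pair hnm]
    have e1 : (α - ev F b₁ b₂ n s₁ α γ) * s₁ - (α + δ) * s₁
        = -((ev F b₁ b₂ n s₁ α γ + δ)) * s₁ := by ring
    have e2 : (γ - ev F b₁ b₂ n s₁ α γ) * s₂ - (γ + δ) * s₂
        = -((ev F b₁ b₂ n s₁ α γ + δ)) * s₂ := by ring
    rw [e1, e2, abs_mul, abs_mul, hs₁, hs₂, abs_neg,
      abs_of_nonneg (by linarith : (0:ℝ) ≤ ev F b₁ b₂ n s₁ α γ + δ)]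
    ring
  rw [hlhs] at hd
  have hev0 : ev F b₁ b₂ n s₁ α γ = 0 := by
    have := le_trans hd hrhs
    linarith
  rw [hev0, sub_zero, sub_zero] at heq
  exact heq

include hbij hne in
lemma signed_gen (hF0 : F 0 = 0) {g : X} {i : ℕ} (hgi : ‖g‖ ≤ 1)
    (hFgi : F g = lp.single 1 i (1:ℝ)) (a : ℝ) :
    ∃ s : ℝ, ∃ b : X, |s| = 1 ∧ ‖b‖ ≤ 1 ∧ F b = lp.single 1 i s ∧
      |a| * s = a ∧ |a| • b = a • g := by
  rcases le_or_gt 0 a with h | h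
  · exact ⟨1, g, by norm_num, hgi, by simpa using hFgi,
      by rw [mul_one, abs_of_nonneg h],
      by rw [abs_of_nonneg h]⟩
  · refine ⟨-1, -g, by norm_num, by simpa using hgi, ?_, ?_, ?_⟩
    · exact opp F hbij hne hF0 hgi hFgi (by norm_num)
    · rw [abs_of_neg h]; ring
    · rw [abs_of_neg h, smul_neg, neg_smul, neg_neg]

include hbij hne in
lemma pair_signed (hF0 : F 0 = 0) {g₁ g₂ : X} {i j : ℕ} (hij : i ≠ j)
    (hgi : ‖g₁‖ ≤ 1) (hgj : ‖g₂‖ ≤ 1)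
    (hFgi : F g₁ = lp.single 1 i (1:ℝ)) (hFgj : F g₂ = lp.single 1 j (1:ℝ))
    {a b : ℝ} (hab : |a| + |b| ≤ 1) :
    F (a • g₁ + b • g₂) = lp.single 1 i a + lp.single 1 j b := by
  obtain ⟨s₁, b₁, hs₁, hb₁, hFb₁, hsa₁, hsm₁⟩ := signed_gen F hbij hne hF0 hgi hFgi a
  obtain ⟨s₂, b₂, hs₂, hb₂, hFb₂, hsa₂, hsm₂⟩ := signed_gen F hbij hne hF0 hgj hFgj b
  have h := pair_full F hbij hne hF0 hij hb₁ hb₂ hFb₁ hFb₂ hs₁ hs₂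
    (abs_nonneg a) (abs_nonneg b) hab
  rw [hsm₁, hsm₂, hsa₁, hsa₂] at h
  exact h

include hbij hne in
lemma main_ind (hF0 : F 0 = 0) (g : ℕ → X) (hg : ∀ n, ‖g n‖ ≤ 1)
    (hFg : ∀ n, F (g n) = lp.single 1 n (1:ℝ)) :
    ∀ (k N : ℕ) (a : ℕ → ℝ), ((Finset.range N).filter (fun n => a n ≠ 0)).card = k →
    (∑ n ∈ Finset.range N, |a n|) ≤ 1 →
    F (∑ n ∈ Finset.range N, a n • g n)
      = ∑ n ∈ Finset.range N, a n • lp.single 1 n (1:ℝ) := by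
  intro k
  induction k using Nat.strong_induction_on with
  | _ k IH =>
  intro N a hcard hmass
  have hsum_filter_x : ∑ n ∈ (Finset.range N).filter (fun n => a n ≠ 0), a n • g n
      = ∑ n ∈ Finset.range N, a n • g n := by
    apply Finset.sum_filter_of_ne
    intro x _ hx
    intro h
    rw [h, zero_smul] at hx
    exact hx rfl
  have hsum_filter_y : ∑ n ∈ (Finset.range N).filter (fun n => a n ≠ 0),
        a n • (lp.single 1 n (1:ℝ) : L1)
      = ∑ n ∈ Finset.range N, a n • lp.single 1 n (1:ℝ) := by
    apply Finset.sum_filter_of_ne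
    intro x _ hx
    intro h
    rw [h, zero_smul] at hx
    exact hx rfl
  match k, hcard with
  | 0, hcard =>
    have hfe : (Finset.range N).filter (fun n => a n ≠ 0) = ∅ := Finset.card_eq_zero.mp hcard
    have hz : ∀ n ∈ Finset.range N, a n = 0 := by
      intro n hn
      by_contra h
      have : n ∈ (Finset.range N).filter (fun n => a n ≠ 0) := Finset.mem_filter.mpr ⟨hn, h⟩
      rw [hfe] at this
      exact absurd this (Finset.notMem_empty n)
    have hx0 : ∑ n ∈ Finset.range N, a n • g n = 0 :=
      Finset.sum_eq_zero (fun n hn => by rw [hz n hn, zero_smul])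
    have hy0 : ∑ n ∈ Finset.range N, a n • (lp.single 1 n (1:ℝ) : L1) = 0 :=
      Finset.sum_eq_zero (fun n hn => by rw [hz n hn, zero_smul])
    rw [hx0, hy0, hF0]
  | 1, hcard =>
    obtain ⟨j, hj⟩ := Finset.card_eq_one.mp hcard
    have hjmem : j ∈ (Finset.range N).filter (fun n => a n ≠ 0) := by
      rw [hj]; exact Finset.mem_singleton_self j
    obtain ⟨hjr, _⟩ := Finset.mem_filter.mp hjmem
    have hxval : ∑ n ∈ Finset.range N, a n • g n = a j • g j := by
      rw [← hsum_filter_x, hj, Finset.sum_singleton]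
    have hyval : ∑ n ∈ Finset.range N, a n • (lp.single 1 n (1:ℝ) : L1)
        = a j • lp.single 1 j (1:ℝ) := by
      rw [← hsum_filter_y, hj, Finset.sum_singleton]
    have hja : |a j| ≤ 1 := by
      have h1 : |a j| ≤ ∑ n ∈ Finset.range N, |a n| :=
        Finset.single_le_sum (f := fun n => |a n|) (fun i _ => abs_nonneg (a i)) hjr
      linarith
    obtain ⟨hja1, hja2⟩ := abs_le.mp hja
    rw [hxval, hyval]
    have := rayIcc F hbij hne hF0 (hg j) (hFg j) (by norm_num) hja1 hja2
    rw [this, mul_one, smul_single', mul_one]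
  | 2, hcard =>
    obtain ⟨i, j, hij, hf⟩ := Finset.card_eq_two.mp hcard
    have himem : i ∈ (Finset.range N).filter (fun n => a n ≠ 0) := by
      rw [hf]; exact Finset.mem_insert_self i {j}
    have hjmem : j ∈ (Finset.range N).filter (fun n => a n ≠ 0) := by
      rw [hf]; exact Finset.mem_insert_of_mem (Finset.mem_singleton_self j)
    obtain ⟨hir, _⟩ := Finset.mem_filter.mp himem
    obtain ⟨hjr, _⟩ := Finset.mem_filter.mp hjmem
    have hxval : ∑ n ∈ Finset.range N, a n • g n = a i • g i + a j • g j := by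
      rw [← hsum_filter_x, hf, Finset.sum_pair hij]
    have hyval : ∑ n ∈ Finset.range N, a n • (lp.single 1 n (1:ℝ) : L1)
        = a i • lp.single 1 i (1:ℝ) + a j • lp.single 1 j (1:ℝ) := by
      rw [← hsum_filter_y, hf, Finset.sum_pair hij]
    have hmass2 : |a i| + |a j| ≤ 1 := by
      have h1 : ∑ n ∈ (Finset.range N).filter (fun n => a n ≠ 0), |a n|
          ≤ ∑ n ∈ Finset.range N, |a n| :=
        Finset.sum_le_sum_of_subset_of_nonneg (Finset.filter_subset _ _)
          (fun n _ _ => abs_nonneg (a n))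
      rw [hf, Finset.sum_pair hij] at h1
      linarith
    rw [hxval, hyval]
    have := pair_signed F hbij hne hF0 hij (hg i) (hg j) (hFg i) (hFg j) hmass2
    rw [this, smul_single', smul_single', mul_one, mul_one]
  | (k' + 3), hcard =>
    -- general step
    set s : Finset ℕ := (Finset.range N).filter (fun n => a n ≠ 0) with hs
    set x : X := ∑ n ∈ Finset.range N, a n • g n with hx
    set y : L1 := ∑ n ∈ Finset.range N, a n • lp.single 1 n (1:ℝ) with hy
    have hxnorm : ‖x‖ ≤ 1 := by
      rw [hx]
      calc ‖∑ n ∈ Finset.range N, a n • g n‖ ≤ ∑ n ∈ Finset.range N, ‖a n • g n‖ :=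
            norm_sum_le _ _
        _ ≤ ∑ n ∈ Finset.range N, |a n| := by
            apply Finset.sum_le_sum
            intro n _
            rw [norm_smul, Real.norm_eq_abs]
            calc |a n| * ‖g n‖ ≤ |a n| * 1 :=
                  mul_le_mul_of_nonneg_left (hg n) (abs_nonneg _)
              _ = |a n| := mul_one _
        _ ≤ 1 := hmass
    -- the constraint for each j in the support
    have hC : ∀ j ∈ s, ‖(F x - y) + lp.single 1 j (a j)‖ ≤ |a j| := by
      intro j hjs
      obtain ⟨hjr, hja⟩ := Finset.mem_filter.mp hjs
      set a' : ℕ → ℝ := Function.update a j 0 with ha'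
      have hcard' : ((Finset.range N).filter (fun n => a' n ≠ 0)).card = k' + 2 := by
        rw [ha', filter_update_erase, ← hs, Finset.card_erase_of_mem hjs, hcard]
        omega
      have hmass' : (∑ n ∈ Finset.range N, |a' n|) ≤ 1 := by
        calc ∑ n ∈ Finset.range N, |a' n| ≤ ∑ n ∈ Finset.range N, |a n| := by
              apply Finset.sum_le_sum
              intro n _
              rw [ha', Function.update_apply]
              by_cases h : n = j
              · rw [if_pos h]; simp [abs_nonneg]
              · rw [if_neg h]
          _ ≤ 1 := hmass
      have hIH := IH (k' + 2) (by omega) N a' hcard' hmass'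
      have hx' : ∑ n ∈ Finset.range N, a' n • g n = x - a j • g j := by
        rw [hx]
        apply sum_update_split hjr
        · rw [ha', Function.update_self, zero_smul]
        · intro n hn
          rw [ha', Function.update_of_ne hn]
      have hy' : ∑ n ∈ Finset.range N, a' n • (lp.single 1 n (1:ℝ) : L1)
          = y - a j • lp.single 1 j (1:ℝ) := by
        rw [hy]
        apply sum_update_split hjr
        · rw [ha', Function.update_self, zero_smul]
        · intro n hn
          rw [ha', Function.update_of_ne hn]
      rw [hx', hy'] at hIH
      have hx'norm : ‖x - a j • g j‖ ≤ 1 := by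
        have : x - a j • g j = ∑ n ∈ Finset.range N, a' n • g n := by rw [hx']
        rw [this]
        calc ‖∑ n ∈ Finset.range N, a' n • g n‖ ≤ ∑ n ∈ Finset.range N, ‖a' n • g n‖ :=
              norm_sum_le _ _
          _ ≤ ∑ n ∈ Finset.range N, |a' n| := by
              apply Finset.sum_le_sum
              intro n _
              rw [norm_smul, Real.norm_eq_abs]
              calc |a' n| * ‖g n‖ ≤ |a' n| * 1 :=
                    mul_le_mul_of_nonneg_left (hg n) (abs_nonneg _)
                _ = |a' n| := mul_one _
          _ ≤ 1 := hmass'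
      have hd := hne x (mem_cb hxnorm) (x - a j • g j) (mem_cb hx'norm)
      rw [hIH] at hd
      have e1 : F x - (y - a j • lp.single 1 j (1:ℝ))
          = (F x - y) + lp.single 1 j (a j) := by
        rw [smul_single', mul_one]
        abel
      have e2 : x - (x - a j • g j) = a j • g j := by abel
      rw [e1, e2] at hd
      calc ‖(F x - y) + lp.single 1 j (a j)‖ ≤ ‖a j • g j‖ := hd
        _ = |a j| * ‖g j‖ := by rw [norm_smul, Real.norm_eq_abs]
        _ ≤ |a j| * 1 := mul_le_mul_of_nonneg_left (hg j) (abs_nonneg _)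
        _ = |a j| := mul_one _
    -- extract three distinct indices
    have hcard3 : 3 ≤ s.card := by rw [hs, hcard]; omega
    obtain ⟨j₁, hj₁⟩ := Finset.card_pos.mp (by omega : 0 < s.card)
    have hcard2 : 0 < (s.erase j₁).card := by
      rw [Finset.card_erase_of_mem hj₁]
      omega
    obtain ⟨j₂, hj₂⟩ := Finset.card_pos.mp hcard2
    have hcard1 : 0 < ((s.erase j₁).erase j₂).card := by
      rw [Finset.card_erase_of_mem hj₂, Finset.card_erase_of_mem hj₁]
      omega
    obtain ⟨j₃, hj₃⟩ := Finset.card_pos.mp hcard1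
    have h21 : j₂ ≠ j₁ := Finset.ne_of_mem_erase hj₂
    have h32 : j₃ ≠ j₂ := Finset.ne_of_mem_erase hj₃
    have h31 : j₃ ≠ j₁ := Finset.ne_of_mem_erase (Finset.mem_of_mem_erase hj₃)
    have hj₂s : j₂ ∈ s := Finset.mem_of_mem_erase hj₂
    have hj₃s : j₃ ∈ s := Finset.mem_of_mem_erase (Finset.mem_of_mem_erase hj₃)
    -- translate the constraints
    have hD : ∀ j ∈ s, ‖(F x - y) - lp.single 1 j ((F x - y) j)‖ ≤ |(F x - y) j| := by
      intro j hjs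
      have h := hC j hjs
      have e : (F x - y) + lp.single 1 j (a j) = (F x - y) - lp.single 1 j (-(a j)) := by
        rw [lp.single_neg, sub_neg_eq_add]
      rw [e, norm_sub_single] at h
      have habs : |a j| - |(F x - y) j + a j| ≤ |(F x - y) j| := by
        have h2 : |a j| ≤ |(F x - y) j + a j| + |(F x - y) j| := by
          calc |a j| = |((F x - y) j + a j) + (-(F x - y) j)| := by ring_nf
            _ ≤ |(F x - y) j + a j| + |(-(F x - y) j)| := abs_add_le _ _
            _ = |(F x - y) j + a j| + |(F x - y) j| := by rw [abs_neg]
        linarith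
      have e2 : (F x - y) j - (-(a j)) = (F x - y) j + a j := by ring
      rw [e2] at h
      linarith
    have hw0 : F x - y = 0 :=
      three_pinch h21.symm h31.symm h32.symm (hD j₁ hj₁) (hD j₂ hj₂s) (hD j₃ hj₃s)
    have := sub_eq_zero.mp hw0
    rw [hx, hy] at this
    exact this

end Main
end PlasticL1
end

open PlasticL1 in
theorem nonexpansive_bijection_l1_claim_finite_sums
    {X : Type*} [NormedAddCommGroup X] [NormedSpace ℝ X] [CompleteSpace X]
    (F : X → lp (fun _ : ℕ => ℝ) 1)
    (hbij : Set.BijOn F (closedBall (0 : X) 1)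
      (closedBall (0 : lp (fun _ : ℕ => ℝ) 1) 1))
    (hne : ∀ x ∈ closedBall (0 : X) 1, ∀ y ∈ closedBall (0 : X) 1,
      ‖F x - F y‖ ≤ ‖x - y‖)
    (g : ℕ → X) (hg : ∀ n, g n ∈ closedBall (0 : X) 1)
    (hFg : ∀ n, F (g n) = lp.single 1 n (1 : ℝ))
    (N : ℕ) (a : ℕ → ℝ)
    (hnorm : ‖∑ n ∈ Finset.range N, a n • g n‖ ≤ 1) :
    F (∑ n ∈ Finset.range N, a n • g n)
      = ∑ n ∈ Finset.range N, a n • lp.single 1 n (1 : ℝ) := by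
  classical
  have hF0 : F 0 = 0 := F_zero F hbij hne
  have hg' : ∀ n, ‖g n‖ ≤ 1 := fun n => by
    simpa [mem_closedBall_zero_iff] using hg n
  set S : ℝ := ∑ n ∈ Finset.range N, |a n| with hS
  rcases le_or_gt S 1 with hS1 | hS1
  · exact main_ind F hbij hne hF0 g hg' hFg _ N a rfl hS1
  · exfalso
    have hSpos : (0:ℝ) < S := by linarith
    set a' : ℕ → ℝ := fun n => a n / S with ha'
    have hmassq : ∑ n ∈ Finset.range N, |a' n| = 1 := by
      have e : ∀ n ∈ Finset.range N, |a' n| = |a n| / S := by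
        intro n _
        rw [ha']
        rw [abs_div, abs_of_pos hSpos]
      rw [Finset.sum_congr rfl e, ← Finset.sum_div, ← hS, div_self hSpos.ne']
    have hres := main_ind F hbij hne hF0 g hg' hFg _ N a' rfl (le_of_eq hmassq)
    have hx' : ∑ n ∈ Finset.range N, a' n • g n
        = S⁻¹ • ∑ n ∈ Finset.range N, a n • g n := by
      rw [Finset.smul_sum]
      apply Finset.sum_congr rfl
      intro n _
      show (a n / S) • g n = S⁻¹ • (a n • g n)
      rw [smul_smul, div_eq_inv_mul]
    have hy'norm : ‖∑ n ∈ Finset.range N, a' n • (lp.single 1 n (1:ℝ))‖ = 1 := by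
      have e : ∀ n ∈ Finset.range N,
          a' n • (lp.single 1 n (1:ℝ))
            = (lp.single 1 n (a' n) : lp (fun _ : ℕ => ℝ) 1) := by
        intro n _
        rw [smul_single', mul_one]
      rw [Finset.sum_congr rfl e]
      have h := lp.norm_sum_single (p := 1) (E := fun _ : ℕ => ℝ) (by simp) a'
        (Finset.range N)
      simp only [ENNReal.toReal_one, Real.rpow_one] at h
      rw [h]
      have e2 : ∀ n ∈ Finset.range N, ‖a' n‖ = |a' n| := fun n _ => rfl
      rw [Finset.sum_congr rfl e2, hmassq]
    have hxnorm : ‖∑ n ∈ Finset.range N, a' n • g n‖ ≤ S⁻¹ := by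
      rw [hx', norm_smul, Real.norm_eq_abs, abs_of_pos (inv_pos.mpr hSpos)]
      calc S⁻¹ * ‖∑ n ∈ Finset.range N, a n • g n‖ ≤ S⁻¹ * 1 :=
            mul_le_mul_of_nonneg_left hnorm (le_of_lt (inv_pos.mpr hSpos))
        _ = S⁻¹ := mul_one _
    have hSinv1 : S⁻¹ < 1 := by
      rw [inv_lt_one_iff₀]
      right
      exact hS1
    have hxnorm1 : ‖∑ n ∈ Finset.range N, a' n • g n‖ ≤ 1 :=
      le_trans hxnorm (le_of_lt hSinv1)
    have hle := F_norm_le F hne hF0 hxnorm1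
    rw [hres, hy'norm] at hle
    linarith [le_trans hle hxnorm]
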